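/- arXiv:1904.08904 — 7 statements merged into one kernel-verified Lean document; each statement's English description precedes it below -/
import Mathlib

section
/- Let λ be a partition with at most r parts, each of size at most c, and let (a,b) ∉ [λ] be a box such that [λ] ∪ {(a,b)} is the Young diagram of a partition λ'. Let R = {h_{(a,j)}(λ) : 1 ≤ j < b} be the hook lengths of λ in row a west of (a,b) and R' = {h_{(i,b)}(λ') : a < i ≤ r} be the hook lengths of λ' (complementary hooks, for boxes outside [λ']) in column b south of (a,b). Then R and R' are disjoint and R ∪ R' = {1, 2, …, r − a + b − 1}. -/
/-- The boxes of the `r × c` rectangle `D`, with 1-based matrix coordinates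
`(i, j)`, `1 ≤ i ≤ r`, `1 ≤ j ≤ c`. -/
def rect (r c : ℕ) : Finset (ℕ × ℕ) := Finset.Icc 1 r ×ˢ Finset.Icc 1 c

/-- The boxes of the Young diagram `[λ]` of the partition whose `i`-th part is
`l i`, viewed inside the `r × c` rectangle. -/
def cells (l : ℕ → ℕ) (r c : ℕ) : Finset (ℕ × ℕ) :=
  (rect r c).filter (fun p => p.2 ≤ l p.1)

/-- The boxes of `D \ [λ]`. -/
def ocells (l : ℕ → ℕ) (r c : ℕ) : Finset (ℕ × ℕ) :=
  (rect r c).filter (fun p => l p.1 < p.2)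

/-- The hook length of a box `(i, j) ∈ [λ]`: the box itself, the boxes of `[λ]`
east of it in row `i` (there are `l i - j` of them), and the boxes of `[λ]`
south of it in column `j`. -/
def hin (l : ℕ → ℕ) (r i j : ℕ) : ℕ :=
  1 + (l i - j) + ((Finset.Icc (i + 1) r).filter (fun i' => j ≤ l i')).card

/-- The (complementary) hook length of a box `(i, j) ∈ D \ [λ]`: the box itself,
the boxes of `D \ [λ]` west of it in row `i`, and the boxes of `D \ [λ]` north
of it in column `j`. -/
def hout (l : ℕ → ℕ) (i j : ℕ) : ℕ :=
  1 + ((Finset.Icc 1 (j - 1)).filter (fun j' => l i < j')).card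
    + ((Finset.Icc 1 (i - 1)).filter (fun i' => l i' < j)).card

/-- The distance of a box `(i, j) ∈ [λ]`: the number of boxes in any monotone
walk by steps south and west from `(i, j)` to `(r, 1)`, inclusive. -/
def dIn (r i j : ℕ) : ℕ := (r - i) + (j - 1) + 1

/-- The distance of a box `(i, j) ∈ D \ [λ]`: the number of boxes in any
monotone walk by steps north and east from `(i, j)` to `(1, c)`, inclusive. -/
def dOut (c i j : ℕ) : ℕ := (i - 1) + (c - j) + 1

/-- **Lemma 2.1(i).** Let `λ` fit in the `r × c` rectangle, and let `(a, b)` be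
an addable box of `λ`, so that `λ' = λ ∪ {(a,b)}` is a partition.  Let
`R = {h_{(a,j)}(λ) : 1 ≤ j < b}` (hook lengths of `λ` in row `a` west of
`(a,b)`) and `R' = {h_{(i,b)}(λ') : a < i ≤ r}` (complementary hook lengths of
`λ'` in column `b` south of `(a,b)`).  Then `R` and `R'` are disjoint and
`R ∪ R' = {1, …, r - a + b - 1}`. -/
theorem row_column_complementary_hooks_row (r c a b : ℕ) (l : ℕ → ℕ)
    (hA : ∀ i, l (i + 1) ≤ l i) (hr : ∀ i, r < i → l i = 0) (hc : ∀ i, l i ≤ c)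
    (ha1 : 1 ≤ a) (har : a ≤ r) (hb1 : 1 ≤ b) (hbc : b ≤ c)
    (hadd : l a + 1 = b) (hcorner : a = 1 ∨ b ≤ l (a - 1)) :
    Disjoint ((Finset.Icc 1 (b - 1)).image (fun j => hin l r a j))
        ((Finset.Icc (a + 1) r).image (fun i => hout (Function.update l a b) i b)) ∧
      (Finset.Icc 1 (b - 1)).image (fun j => hin l r a j) ∪
          (Finset.Icc (a + 1) r).image (fun i => hout (Function.update l a b) i b) =
        Finset.Icc 1 (r - a + b - 1) := by

  classical
  have hmono : Antitone l := antitone_nat_of_succ_le hA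
  have hla : l a = b - 1 := by omega
  set l' : ℕ → ℕ := Function.update l a b with hl'
  set F : ℕ → ℕ := fun j => ((Finset.Icc (a+1) r).filter (fun i' => j ≤ l i')).card with hF
  have hinf : ∀ j, hin l r a j = 1 + (l a - j) + F j := fun j => rfl
  have hFle : ∀ j, F j ≤ r - a := by
    intro j
    calc F j ≤ (Finset.Icc (a+1) r).card := Finset.card_filter_le _ _
    _ = r - a := by rw [Nat.card_Icc]; omega
  have hFanti : ∀ ⦃j j'⦄ , j ≤ j' → F j' ≤ F j := by
    intro j j' h
    apply Finset.card_le_card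
    intro x hx
    rw [Finset.mem_filter] at hx ⊢
    exact ⟨hx.1, le_trans h hx.2⟩
  have hlile : ∀ i, a ≤ i → l i ≤ b - 1 := by
    intro i hi
    have := hmono hi
    omega
  have houtf : ∀ i, a+1 ≤ i → i ≤ r → hout l' i b = 1 + ((b-1) - l i) + ((i-1) - a) := by
    intro i hi1 hi2
    have hne : i ≠ a := by omega
    have h1 : (Finset.Icc 1 (b-1)).filter (fun j' => l' i < j') = Finset.Icc (l i + 1) (b-1) := by
      ext j'
      simp only [Finset.mem_filter, Finset.mem_Icc, hl', Function.update_of_ne hne]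
      omega
    have h2 : (Finset.Icc 1 (i-1)).filter (fun i' => l' i' < b) = Finset.Icc (a+1) (i-1) := by
      ext i'
      simp only [Finset.mem_filter, Finset.mem_Icc]
      constructor
      · rintro ⟨⟨h1', h2'⟩, h3'⟩
        refine ⟨?_, h2'⟩
        by_contra hcon
        push_neg at hcon
        rcases eq_or_lt_of_le (show i' ≤ a by omega) with heq | hlt
        · rw [heq, hl', Function.update_self] at h3'
          omega
        · have hne' : i' ≠ a := by omega
          rw [hl', Function.update_of_ne hne'] at h3'
          have ha2 : a ≠ 1 := by omega
          have hb' : b ≤ l (a - 1) := hcorner.resolve_left ha2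
          have := hmono (show i' ≤ a - 1 by omega)
          omega
      · rintro ⟨h1', h2'⟩
        have hne' : i' ≠ a := by omega
        rw [hl', Function.update_of_ne hne']
        have := hlile i' (by omega)
        exact ⟨⟨by omega, h2'⟩, by omega⟩
    unfold hout
    rw [h1, h2, Nat.card_Icc, Nat.card_Icc]
    have := hlile i (by omega)
    omega
  -- disjointness
  have hdisj : Disjoint ((Finset.Icc 1 (b - 1)).image (fun j => hin l r a j))
      ((Finset.Icc (a + 1) r).image (fun i => hout l' i b)) := by
    rw [Finset.disjoint_left]
    rintro x hx hx'
    obtain ⟨j, hj, rfl⟩ := Finset.mem_image.mp hx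
    obtain ⟨i, hi, heq⟩ := Finset.mem_image.mp hx'
    rw [Finset.mem_Icc] at hj hi
    rw [houtf i hi.1 hi.2, hinf j] at heq
    have hli : l i ≤ b - 1 := hlile i (by omega)
    by_cases hcase : j ≤ l i
    · have hsub : Finset.Icc (a+1) i ⊆ (Finset.Icc (a+1) r).filter (fun i' => j ≤ l i') := by
        intro x hx''
        rw [Finset.mem_Icc] at hx''
        rw [Finset.mem_filter, Finset.mem_Icc]
        have := hmono hx''.2
        exact ⟨⟨hx''.1, by omega⟩, by omega⟩
      have hcard : i - a ≤ F j := by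
        have h3 := Finset.card_le_card hsub
        have h4 : F j = ((Finset.Icc (a+1) r).filter (fun i' => j ≤ l i')).card := rfl
        rw [Nat.card_Icc] at h3
        omega
      omega
    · push_neg at hcase
      have hsub : (Finset.Icc (a+1) r).filter (fun i' => j ≤ l i') ⊆ Finset.Icc (a+1) (i-1) := by
        intro x hx''
        rw [Finset.mem_filter, Finset.mem_Icc] at hx''
        rw [Finset.mem_Icc]
        refine ⟨hx''.1.1, ?_⟩
        by_contra hcon
        push_neg at hcon
        have := hmono (show i ≤ x by omega)
        omega
      have hcard : F j ≤ i - 1 - a := by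
        have h3 := Finset.card_le_card hsub
        have h4 : F j = ((Finset.Icc (a+1) r).filter (fun i' => j ≤ l i')).card := rfl
        rw [Nat.card_Icc] at h3
        omega
      omega
  refine ⟨hdisj, ?_⟩
  -- injectivity / strict monotonicity
  have hin_lt : ∀ j j', 1 ≤ j → j < j' → j' ≤ b-1 → hin l r a j' < hin l r a j := by
    intro j j' _ h hj'
    have hF' := hFanti h.le
    rw [hinf, hinf]
    omega
  have hout_lt : ∀ i i', a+1 ≤ i → i < i' → i' ≤ r → hout l' i b < hout l' i' b := by
    intro i i' hi h hi'
    rw [houtf i hi (by omega), houtf i' (by omega) hi']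
    have := hmono h.le
    omega
  have hcardR : ((Finset.Icc 1 (b - 1)).image (fun j => hin l r a j)).card = b - 1 := by
    rw [Finset.card_image_of_injOn, Nat.card_Icc]
    · omega
    · intro x hx y hy heq
      rw [Finset.coe_Icc, Set.mem_Icc] at hx hy
      have heq' : hin l r a x = hin l r a y := heq
      by_contra hne
      rcases lt_or_gt_of_ne hne with h | h
      · have := hin_lt x y hx.1 h hy.2; omega
      · have := hin_lt y x hy.1 h hx.2; omega
  have hcardR' : ((Finset.Icc (a + 1) r).image (fun i => hout l' i b)).card = r - a := by
    rw [Finset.card_image_of_injOn, Nat.card_Icc]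
    · omega
    · intro x hx y hy heq
      rw [Finset.coe_Icc, Set.mem_Icc] at hx hy
      have heq' : hout l' x b = hout l' y b := heq
      by_contra hne
      rcases lt_or_gt_of_ne hne with h | h
      · have := hout_lt x y hx.1 h hy.2; omega
      · have := hout_lt y x hy.1 h hx.2; omega
  have hsub : (Finset.Icc 1 (b - 1)).image (fun j => hin l r a j) ∪
      (Finset.Icc (a + 1) r).image (fun i => hout l' i b) ⊆ Finset.Icc 1 (r - a + b - 1) := by
    intro x hx
    rw [Finset.mem_union] at hx
    rw [Finset.mem_Icc]
    rcases hx with hx | hx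
    · obtain ⟨j, hj, rfl⟩ := Finset.mem_image.mp hx
      rw [Finset.mem_Icc] at hj
      rw [hinf]
      have := hFle j
      omega
    · obtain ⟨i, hi, rfl⟩ := Finset.mem_image.mp hx
      rw [Finset.mem_Icc] at hi
      rw [houtf i hi.1 hi.2]
      omega
  apply Finset.eq_of_subset_of_card_le hsub
  rw [Finset.card_union_of_disjoint hdisj, hcardR, hcardR', Nat.card_Icc]
  omega
end

section
/- Let λ be a partition with at most r parts, each of size at most c, and let (a,b) ∉ [λ] be an addable box so that λ' = λ ∪ {(a,b)} is a partition. Let C = {h_{(i,b)}(λ) : 1 ≤ i < a} and C' = {h_{(a,j)}(λ') : b < j ≤ c}. Then C and C' are disjoint and C ∪ C' = {1, 2, …, c − b + a − 1}. -/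
def Ncnt (l : ℕ → ℕ) (a j : ℕ) : ℕ := ((Finset.Icc 1 (a-1)).filter (fun i' => l i' < j)).card

/-- **Lemma 2.1(ii).** Let `λ` fit in the `r × c` rectangle, and let `(a, b)` be
an addable box of `λ`, so that `λ' = λ ∪ {(a,b)}` is a partition.  Let
`C = {h_{(i,b)}(λ) : 1 ≤ i < a}` (hook lengths of `λ` in column `b` north of
`(a,b)`) and `C' = {h_{(a,j)}(λ') : b < j ≤ c}` (complementary hook lengths of
`λ'` in row `a` east of `(a,b)`).  Then `C` and `C'` are disjoint and
`C ∪ C' = {1, …, c - b + a - 1}`. -/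
theorem row_column_complementary_hooks_column (r c a b : ℕ) (l : ℕ → ℕ)
    (hA : ∀ i, l (i + 1) ≤ l i) (hr : ∀ i, r < i → l i = 0) (hc : ∀ i, l i ≤ c)
    (ha1 : 1 ≤ a) (har : a ≤ r) (hb1 : 1 ≤ b) (hbc : b ≤ c)
    (hadd : l a + 1 = b) (hcorner : a = 1 ∨ b ≤ l (a - 1)) :
    Disjoint ((Finset.Icc 1 (a - 1)).image (fun i => hin l r i b))
        ((Finset.Icc (b + 1) c).image (fun j => hout (Function.update l a b) a j)) ∧
      (Finset.Icc 1 (a - 1)).image (fun i => hin l r i b) ∪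
          (Finset.Icc (b + 1) c).image (fun j => hout (Function.update l a b) a j) =
        Finset.Icc 1 (c - b + a - 1) := by
  have hmono : Antitone l := antitone_nat_of_succ_le hA
  have hbl : ∀ i, 1 ≤ i → i ≤ a - 1 → b ≤ l i := by
    intro i h1 h2
    rcases hcorner with h | h
    · omega
    · exact le_trans h (hmono (by omega))
  have hin_eq : ∀ i, 1 ≤ i → i ≤ a - 1 → hin l r i b + (b + i) = l i + a := by
    intro i h1 h2
    have hfil : (Finset.Icc (i+1) r).filter (fun i' => b ≤ l i') = Finset.Icc (i+1) (a-1) := by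
      ext i'
      simp only [Finset.mem_filter, Finset.mem_Icc]
      constructor
      · rintro ⟨⟨h3, h4⟩, h5⟩
        refine ⟨h3, ?_⟩
        by_contra h6
        have : l i' ≤ l a := hmono (by omega)
        omega
      · rintro ⟨h3, h4⟩
        exact ⟨⟨h3, by omega⟩, hbl i' (by omega) h4⟩
    have hb : b ≤ l i := hbl i h1 h2
    unfold hin
    rw [hfil, Nat.card_Icc]
    omega
  have hout_eq : ∀ j, b + 1 ≤ j → hout (Function.update l a b) a j = (j - b) + Ncnt l a j := by
    intro j hj
    unfold hout Ncnt
    have h1 : (Finset.Icc 1 (j-1)).filter (fun j' => Function.update l a b a < j')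
        = Finset.Icc (b+1) (j-1) := by
      rw [Function.update_self]
      ext j'; simp only [Finset.mem_filter, Finset.mem_Icc]; omega
    have h2 : (Finset.Icc 1 (a-1)).filter (fun i' => Function.update l a b i' < j)
        = (Finset.Icc 1 (a-1)).filter (fun i' => l i' < j) := by
      apply Finset.filter_congr
      intro i' hi'
      simp only [Finset.mem_Icc] at hi'
      rw [Function.update_of_ne (by omega)]
    rw [h1, h2, Nat.card_Icc]
    omega
  have hNle : ∀ j, Ncnt l a j ≤ a - 1 := by
    intro j
    calc Ncnt l a j ≤ (Finset.Icc 1 (a-1)).card := Finset.card_filter_le _ _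
    _ = a - 1 := by rw [Nat.card_Icc]; omega
  have hNmono : ∀ j j', j ≤ j' → Ncnt l a j ≤ Ncnt l a j' := by
    intro j j' hjj
    apply Finset.card_le_card
    intro x hx
    simp only [Finset.mem_filter] at hx ⊢
    exact ⟨hx.1, by omega⟩
  have hNcase1 : ∀ i j, 1 ≤ i → i ≤ a - 1 → j ≤ l i → Ncnt l a j ≤ a - 1 - i := by
    intro i j h1 h2 h3
    have hsub : (Finset.Icc 1 (a-1)).filter (fun i' => l i' < j) ⊆ Finset.Icc (i+1) (a-1) := by
      intro x hx
      simp only [Finset.mem_filter, Finset.mem_Icc] at hx ⊢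
      refine ⟨?_, hx.1.2⟩
      by_contra h4
      have : l i ≤ l x := hmono (by omega)
      omega
    calc Ncnt l a j ≤ (Finset.Icc (i+1) (a-1)).card := Finset.card_le_card hsub
    _ ≤ a - 1 - i := by rw [Nat.card_Icc]; omega
  have hNcase2 : ∀ i j, 1 ≤ i → i ≤ a - 1 → l i < j → a - i ≤ Ncnt l a j := by
    intro i j h1 h2 h3
    have hsub : Finset.Icc i (a-1) ⊆ (Finset.Icc 1 (a-1)).filter (fun i' => l i' < j) := by
      intro x hx
      simp only [Finset.mem_Icc] at hx
      simp only [Finset.mem_filter, Finset.mem_Icc]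
      have : l x ≤ l i := hmono hx.1
      omega
    calc a - i = (Finset.Icc i (a-1)).card := by rw [Nat.card_Icc]; omega
    _ ≤ Ncnt l a j := Finset.card_le_card hsub
  have hdisj : Disjoint ((Finset.Icc 1 (a - 1)).image (fun i => hin l r i b))
      ((Finset.Icc (b + 1) c).image (fun j => hout (Function.update l a b) a j)) := by
    rw [Finset.disjoint_left]
    intro x hx hx'
    simp only [Finset.mem_image, Finset.mem_Icc] at hx hx'
    obtain ⟨i, ⟨hi1, hi2⟩, hxi⟩ := hx
    obtain ⟨j, ⟨hj1, hj2⟩, hxj⟩ := hx'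
    have e1 := hin_eq i hi1 hi2
    have e2 := hout_eq j hj1
    have hb : b ≤ l i := hbl i hi1 hi2
    rcases le_or_gt j (l i) with h | h
    · have := hNcase1 i j hi1 hi2 h; omega
    · have := hNcase2 i j hi1 hi2 h; omega
  refine ⟨hdisj, ?_⟩
  have hinjf : Set.InjOn (fun i => hin l r i b) ↑(Finset.Icc 1 (a-1)) := by
    intro i hi i' hi' h
    simp only [Finset.coe_Icc, Set.mem_Icc] at hi hi'
    have e1 := hin_eq i hi.1 hi.2
    have e2 := hin_eq i' hi'.1 hi'.2
    simp only at h
    rcases le_total i i' with hle | hle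
    · have := hmono hle; omega
    · have := hmono hle; omega
  have hinjg : Set.InjOn (fun j => hout (Function.update l a b) a j) ↑(Finset.Icc (b+1) c) := by
    intro j hj j' hj' h
    simp only [Finset.coe_Icc, Set.mem_Icc] at hj hj'
    have e1 := hout_eq j hj.1
    have e2 := hout_eq j' hj'.1
    simp only at h
    rcases le_total j j' with hle | hle
    · have := hNmono j j' hle; omega
    · have := hNmono j' j hle; omega
  apply Finset.eq_of_subset_of_card_le
  · intro x hx
    simp only [Finset.mem_union, Finset.mem_image, Finset.mem_Icc] at hx
    rw [Finset.mem_Icc]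
    rcases hx with ⟨i, ⟨hi1, hi2⟩, rfl⟩ | ⟨j, ⟨hj1, hj2⟩, rfl⟩
    · have := hin_eq i hi1 hi2
      have := hbl i hi1 hi2
      have := hc i
      omega
    · have := hout_eq j hj1
      have := hNle j
      omega
  · rw [Finset.card_union_of_disjoint hdisj,
      Finset.card_image_of_injOn hinjf, Finset.card_image_of_injOn hinjg,
      Nat.card_Icc, Nat.card_Icc, Nat.card_Icc]
    omega
end

section
/- Let λ be a partition with at most r rows and largest part at most c. There is a bijection from SSYT_r(λ) to SSYT_r(λ°) sending a tableau t to the tableau t° whose entries in column j are the complement in {1, …, r} of the entries of t in column c+1−j, arranged in increasing order. In particular |SSYT_r(λ)| = |SSYT_r(λ°)|. -/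
/-- `t` is a semistandard Young tableau of shape `λ` (row lengths `l`) with
entries in `{1, …, r}`: rows weakly increase west to east, columns strictly
increase north to south, and `t` is `0` outside the diagram. -/
def IsSSYT (l : ℕ → ℕ) (r : ℕ) (t : ℕ → ℕ → ℕ) : Prop :=
  (∀ i j, 1 ≤ i → 1 ≤ j → j ≤ l i → 1 ≤ t i j ∧ t i j ≤ r) ∧
  (∀ i j, 1 ≤ i → 1 ≤ j → j + 1 ≤ l i → t i j ≤ t i (j + 1)) ∧
  (∀ i j, 1 ≤ i → 1 ≤ j → j ≤ l (i + 1) → t i j < t (i + 1) j) ∧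
  (∀ i j, ¬(1 ≤ i ∧ 1 ≤ j ∧ j ≤ l i) → t i j = 0)

/-- `|t|`, the sum of the entries of the tableau `t` of shape `l`
(with at most `r` rows). -/
def wt (l : ℕ → ℕ) (r : ℕ) (t : ℕ → ℕ → ℕ) : ℕ :=
  ∑ i ∈ Finset.Icc 1 r, ∑ j ∈ Finset.Icc 1 (l i), t i j

/-- The complement `λ°` of `λ` in the `r × c` rectangle: the partition
`(c - λ_r, c - λ_{r-1}, …, c - λ_1)` (trailing zeroes being irrelevant). -/
def lcomp (l : ℕ → ℕ) (r c : ℕ) : ℕ → ℕ :=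
  fun i => if i ≤ r then c - l (r + 1 - i) else 0

/-- The set of entries of column `j` of the tableau `t` of shape `l`. -/
def colEntries (l : ℕ → ℕ) (r : ℕ) (t : ℕ → ℕ → ℕ) (j : ℕ) : Finset ℕ :=
  ((Finset.Icc 1 r).filter (fun i => j ≤ l i)).image (fun i => t i j)

/-- King's column-complement map `t ↦ t°`: the entries of column `j` of `t°`
are the complement in `{1, …, r}` of the entries of column `c + 1 - j` of `t`,
arranged in increasing order from north to south. -/
def complMap (l : ℕ → ℕ) (r c : ℕ) (t : ℕ → ℕ → ℕ) : ℕ → ℕ → ℕ :=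
  fun i j =>
    if 1 ≤ i ∧ 1 ≤ j ∧ j ≤ lcomp l r c i then
      (Finset.sort (Finset.Icc 1 r \ colEntries l r t (c + 1 - j)) (· ≤ ·)).getD
        (i - 1) 0
    else 0

namespace KingAux

/-! ### The `k`-th smallest element of a finite set of naturals -/

noncomputable def sget (S : Finset ℕ) (k : ℕ) : ℕ := (Finset.sort S (· ≤ ·)).getD k 0

lemma sget_eq_get {S : Finset ℕ} {k : ℕ} (hk : k < S.card) :
    sget S k = (Finset.sort S (· ≤ ·)).get ⟨k, by simpa using hk⟩ := by
  unfold sget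
  rw [List.getD_eq_getElem?_getD, List.getElem?_eq_getElem (by simpa using hk)]; rfl

lemma sget_mem {S : Finset ℕ} {k : ℕ} (hk : k < S.card) : sget S k ∈ S := by
  rw [sget_eq_get hk]
  rw [← Finset.mem_sort (α := ℕ) (r := (· ≤ ·))]
  exact List.get_mem _ _

lemma sget_lt_sget {S : Finset ℕ} {k m : ℕ} (hkm : k < m) (hm : m < S.card) :
    sget S k < sget S m := by
  rw [sget_eq_get (hkm.trans hm), sget_eq_get hm]
  exact (Finset.sortedLT_sort S).strictMono_get (by simpa using hkm)

lemma sget_le_sget {S : Finset ℕ} {k m : ℕ} (hkm : k ≤ m) (hm : m < S.card) :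
    sget S k ≤ sget S m := by
  rcases hkm.lt_or_eq with h | h
  · exact (sget_lt_sget h hm).le
  · subst h; rfl

lemma exists_sget {S : Finset ℕ} {y : ℕ} (hy : y ∈ S) :
    ∃ k, k < S.card ∧ sget S k = y := by
  have : y ∈ Finset.sort S (· ≤ ·) := (Finset.mem_sort _).2 hy
  obtain ⟨n, hn⟩ := List.mem_iff_get.1 this
  refine ⟨n, by simpa using n.2, ?_⟩
  rw [sget_eq_get (by simpa using n.2)]
  simpa using hn

lemma sget_le_iff {S : Finset ℕ} {k : ℕ} (hk : k < S.card) (x : ℕ) :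
    sget S k ≤ x ↔ k + 1 ≤ (S.filter (· ≤ x)).card := by
  constructor
  · intro h
    calc k + 1 = (Finset.range (k+1)).card := by simp
    _ ≤ (S.filter (· ≤ x)).card := by
        apply Finset.card_le_card_of_injOn (sget S)
        · intro m hm
          simp only [Finset.mem_coe, Finset.mem_range] at hm
          have hm' : m < S.card := by omega
          simp only [Finset.mem_coe, Finset.mem_filter]
          exact ⟨sget_mem hm', le_trans (sget_le_sget (by omega) hk) h⟩
        · intro a ha b hb hab
          simp only [Finset.coe_range, Set.mem_Iio] at ha hb
          by_contra hne
          rcases Nat.lt_or_ge a b with h' | h'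
          · exact absurd hab (sget_lt_sget h' (by omega)).ne
          · have : b < a := by omega
            exact absurd hab.symm (sget_lt_sget this (by omega)).ne
  · intro h
    by_contra hx
    push_neg at hx
    have hsub : S.filter (· ≤ x) ⊆ (Finset.range k).image (sget S) := by
      intro y hy
      simp only [Finset.mem_filter] at hy
      obtain ⟨m, hm, hmy⟩ := exists_sget hy.1
      have : m < k := by
        by_contra hmk
        push_neg at hmk
        have := sget_le_sget hmk hm
        omega
      exact Finset.mem_image.2 ⟨m, Finset.mem_range.2 this, hmy⟩
    have := (Finset.card_le_card hsub).trans (Finset.card_image_le)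
    simp only [Finset.card_range] at this
    omega

lemma sget_compare {S T : Finset ℕ} {k : ℕ}
    (h : ∀ x, (T.filter (· ≤ x)).card ≤ (S.filter (· ≤ x)).card)
    (hkS : k < S.card) (hkT : k < T.card) : sget S k ≤ sget T k := by
  rw [sget_le_iff hkS]
  exact le_trans ((sget_le_iff hkT (sget T k)).1 le_rfl) (h _)

/-! ### Columns of a tableau -/

def rows (l : ℕ → ℕ) (r j : ℕ) : Finset ℕ :=
  (Finset.Icc 1 r).filter (fun i => j ≤ l i)

lemma colEntries_eq (l : ℕ → ℕ) (r : ℕ) (t : ℕ → ℕ → ℕ) (j : ℕ) :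
    colEntries l r t j = (rows l r j).image (fun i => t i j) := rfl

variable {l : ℕ → ℕ} {r c : ℕ} {t : ℕ → ℕ → ℕ}

lemma col_lt (ht : IsSSYT l r t) (hA : Antitone l) {i i' j : ℕ}
    (h1 : 1 ≤ i) (hii : i < i') (hj : 1 ≤ j) (hl : j ≤ l i') : t i j < t i' j := by
  induction i' with
  | zero => omega
  | succ n ih =>
    rcases Nat.lt_or_ge i n with h | h
    · exact lt_trans (ih h (hl.trans (hA (Nat.le_succ n)))) (ht.2.2.1 n j (by omega) hj hl)
    · have : i = n := by omega
      subst this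
      exact ht.2.2.1 i j h1 hj hl

lemma mem_rows {i j : ℕ} : i ∈ rows l r j ↔ (1 ≤ i ∧ i ≤ r ∧ j ≤ l i) := by
  simp [rows, Finset.mem_filter, Finset.mem_Icc, and_assoc]

lemma row_le_r (hr : ∀ i, r < i → l i = 0) {i j : ℕ} (hj : 1 ≤ j) (hl : j ≤ l i) :
    i ≤ r := by
  by_contra h
  push_neg at h
  rw [hr i h] at hl
  omega

lemma card_rows_ge (hA : Antitone l) {i j : ℕ} (h1 : 1 ≤ i) (hi : i ≤ r) (hj : j ≤ l i) :
    i ≤ (rows l r j).card := by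
  have : Finset.Icc 1 i ⊆ rows l r j := by
    intro m hm
    simp only [Finset.mem_Icc] at hm
    exact mem_rows.2 ⟨hm.1, le_trans hm.2 hi, le_trans hj (hA hm.2)⟩
  simpa using Finset.card_le_card this

lemma col_injOn (ht : IsSSYT l r t) (hA : Antitone l) {j : ℕ} (hj : 1 ≤ j) :
    Set.InjOn (fun i => t i j) (rows l r j) := by
  intro a ha b hb hab
  rw [Finset.mem_coe, mem_rows] at ha hb
  by_contra hne
  rcases Nat.lt_or_ge a b with h | h
  · exact absurd hab (col_lt ht hA ha.1 h hj hb.2.2).ne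
  · have : b < a := by omega
    exact absurd hab.symm (col_lt ht hA hb.1 this hj ha.2.2).ne

lemma card_col (ht : IsSSYT l r t) (hA : Antitone l) {j : ℕ} (hj : 1 ≤ j) :
    (colEntries l r t j).card = (rows l r j).card := by
  rw [colEntries_eq]
  exact Finset.card_image_of_injOn (col_injOn ht hA hj)

lemma col_subset (ht : IsSSYT l r t) {j : ℕ} (hj : 1 ≤ j) :
    colEntries l r t j ⊆ Finset.Icc 1 r := by
  intro y hy
  rw [colEntries_eq, Finset.mem_image] at hy
  obtain ⟨i, hi, hiy⟩ := hy
  rw [mem_rows] at hi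
  have := ht.1 i j hi.1 hj hi.2.2
  simp only [Finset.mem_Icc]
  omega

lemma cnt_col (ht : IsSSYT l r t) (hA : Antitone l) {j : ℕ} (hj : 1 ≤ j) (x : ℕ) :
    ((colEntries l r t j).filter (· ≤ x)).card
      = ((rows l r j).filter (fun i => t i j ≤ x)).card := by
  rw [colEntries_eq, Finset.filter_image]
  exact Finset.card_image_of_injOn ((col_injOn ht hA hj).mono (by
    intro a ha; simp only [Finset.coe_filter, Set.mem_setOf_eq] at ha
    exact ha.1))

lemma cnt_sdiff {A : Finset ℕ} (hA : A ⊆ Finset.Icc 1 r) (x : ℕ) :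
    (((Finset.Icc 1 r) \ A).filter (· ≤ x)).card
      = ((Finset.Icc 1 r).filter (· ≤ x)).card - (A.filter (· ≤ x)).card := by
  have h1 : ((Finset.Icc 1 r) \ A).filter (· ≤ x)
      = (Finset.Icc 1 r).filter (· ≤ x) \ A.filter (· ≤ x) := by
    ext y
    simp only [Finset.mem_filter, Finset.mem_sdiff]
    tauto
  rw [h1, Finset.card_sdiff_of_subset (Finset.filter_subset_filter _ hA)]

/-- The `(i-1)`-th smallest entry of column `j` of `t` is `t i j`. -/
lemma sget_col (ht : IsSSYT l r t) (hA : Antitone l) (hr : ∀ i, r < i → l i = 0)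
    {i j : ℕ} (h1 : 1 ≤ i) (hj : 1 ≤ j) (hl : j ≤ l i) :
    sget (colEntries l r t j) (i - 1) = t i j := by
  have hir : i ≤ r := row_le_r hr hj hl
  have hcard : i ≤ (colEntries l r t j).card := by
    rw [card_col ht hA hj]; exact card_rows_ge hA h1 hir hl
  have hk : i - 1 < (colEntries l r t j).card := by omega
  have htpos : 1 ≤ t i j := (ht.1 i j h1 hj hl).1
  have hfil1 : (rows l r j).filter (fun m => t m j ≤ t i j) = Finset.Icc 1 i := by
    ext m
    simp only [Finset.mem_filter, Finset.mem_Icc, mem_rows]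
    constructor
    · rintro ⟨⟨hm1, hmr, hml⟩, hmt⟩
      refine ⟨hm1, ?_⟩
      by_contra hmi
      push_neg at hmi
      exact absurd hmt (col_lt ht hA h1 hmi hj hml).not_ge
    · rintro ⟨hm1, hmi⟩
      refine ⟨⟨hm1, hmi.trans hir, le_trans hl (hA hmi)⟩, ?_⟩
      rcases hmi.lt_or_eq with h | h
      · exact (col_lt ht hA hm1 h hj hl).le
      · subst h; exact le_rfl
  have hfil2 : (rows l r j).filter (fun m => t m j ≤ t i j - 1) = Finset.Icc 1 (i-1) := by
    ext m
    simp only [Finset.mem_filter, Finset.mem_Icc, mem_rows]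
    constructor
    · rintro ⟨⟨hm1, hmr, hml⟩, hmt⟩
      refine ⟨hm1, ?_⟩
      by_contra hmi
      push_neg at hmi
      have hmi' : i ≤ m := by omega
      have : t i j ≤ t m j := by
        rcases hmi'.lt_or_eq with h | h
        · exact (col_lt ht hA h1 h hj hml).le
        · subst h; exact le_rfl
      omega
    · rintro ⟨hm1, hmi⟩
      have hmi' : m < i := by omega
      refine ⟨⟨hm1, by omega, le_trans hl (hA (by omega))⟩, ?_⟩
      have := col_lt ht hA hm1 hmi' hj hl
      omega
  have hle : sget (colEntries l r t j) (i - 1) ≤ t i j := by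
    rw [sget_le_iff hk, cnt_col ht hA hj, hfil1]
    simp only [Nat.card_Icc]
    omega
  have hge : t i j ≤ sget (colEntries l r t j) (i - 1) := by
    by_contra hgt
    push_neg at hgt
    have : sget (colEntries l r t j) (i - 1) ≤ t i j - 1 := by omega
    rw [sget_le_iff hk, cnt_col ht hA hj, hfil2] at this
    simp only [Nat.card_Icc] at this
    omega
  omega

/-! ### Properties of `lcomp` -/

lemma lcomp_antitone (hA : Antitone l) : Antitone (lcomp l r c) := by
  apply antitone_nat_of_succ_le
  intro n
  unfold lcomp
  rcases Nat.lt_or_ge r (n+1) with h | h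
  · simp only [if_neg (by omega : ¬ n + 1 ≤ r)]
    omega
  · simp only [if_pos h, if_pos (by omega : n ≤ r)]
    have : l (r + 1 - (n+1)) ≥ l (r + 1 - n) := hA (by omega)
    omega

lemma lcomp_le_c {i : ℕ} : lcomp l r c i ≤ c := by
  unfold lcomp; split <;> omega

lemma lcomp_zero {i : ℕ} (hi : r < i) : lcomp l r c i = 0 := by
  unfold lcomp; rw [if_neg (by omega)]

lemma lcomp_lcomp (hr : ∀ i, r < i → l i = 0) (hc : ∀ i, l i ≤ c) {i : ℕ} (hi : 1 ≤ i) :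
    lcomp (lcomp l r c) r c i = l i := by
  unfold lcomp
  rcases Nat.lt_or_ge r i with h | h
  · rw [if_neg (by omega), hr i h]
  · rw [if_pos (by omega), if_pos (by omega)]
    have h2 : r + 1 - (r + 1 - i) = i := by omega
    rw [h2]
    have := hc i
    omega

/-- Reflection `i ↦ r + 1 - i` computes the column lengths of the complement. -/
lemma card_rows_comp (hc : ∀ i, l i ≤ c) {j : ℕ} (hj : 1 ≤ j) (hjc : j ≤ c) :
    (rows (lcomp l r c) r j).card = r - (rows l r (c + 1 - j)).card := by
  have key : (rows (lcomp l r c) r j).card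
      = ((Finset.Icc 1 r).filter (fun i => ¬ (c + 1 - j ≤ l i))).card := by
    apply Finset.card_nbij (fun i => r + 1 - i)
    · intro a ha
      rw [Finset.mem_coe, mem_rows] at ha
      obtain ⟨ha1, har, hal⟩ := ha
      have hl : lcomp l r c a = c - l (r + 1 - a) := by
        unfold lcomp; rw [if_pos har]
      rw [hl] at hal
      have := hc (r + 1 - a)
      simp only [Finset.mem_coe, Finset.mem_filter, Finset.mem_Icc]
      constructor
      · omega
      · omega
    · intro a ha b hb hab
      rw [Finset.mem_coe, mem_rows] at ha hb
      have hab' : r + 1 - a = r + 1 - b := hab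
      omega
    · intro b hb
      simp only [Finset.coe_filter, Set.mem_setOf_eq, Finset.mem_Icc] at hb
      obtain ⟨⟨hb1, hbr⟩, hbl⟩ := hb
      have hmem : (r + 1 - b) ∈ rows (lcomp l r c) r j := by
        rw [mem_rows]
        have hl : lcomp l r c (r + 1 - b) = c - l (r + 1 - (r + 1 - b)) := by
          unfold lcomp; rw [if_pos (by omega)]
        have h2 : r + 1 - (r + 1 - b) = b := by omega
        rw [hl, h2]
        have := hc b
        refine ⟨by omega, by omega, by omega⟩
      exact ⟨r + 1 - b, by simpa using hmem, show r + 1 - (r + 1 - b) = b by omega⟩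
  rw [key]
  have := Finset.card_filter_add_card_filter_not
    (s := Finset.Icc 1 r) (p := fun i => c + 1 - j ≤ l i)
  have hIcc : (Finset.Icc 1 r).card = r := by simp
  unfold rows
  omega


/-! ### The complement map -/

lemma complMap_pos {i j : ℕ} (h : 1 ≤ i ∧ 1 ≤ j ∧ j ≤ lcomp l r c i) :
    complMap l r c t i j
      = sget (Finset.Icc 1 r \ colEntries l r t (c + 1 - j)) (i - 1) := by
  unfold complMap sget
  rw [if_pos h]

lemma complMap_neg {i j : ℕ} (h : ¬(1 ≤ i ∧ 1 ≤ j ∧ j ≤ lcomp l r c i)) :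
    complMap l r c t i j = 0 := by
  unfold complMap; rw [if_neg h]

lemma card_S (ht : IsSSYT l r t) (hA : Antitone l) (hc : ∀ i, l i ≤ c)
    {j : ℕ} (hj : 1 ≤ j) (hjc : j ≤ c) :
    (Finset.Icc 1 r \ colEntries l r t (c + 1 - j)).card
      = (rows (lcomp l r c) r j).card := by
  rw [Finset.card_sdiff_of_subset (col_subset ht (by omega))]
  rw [card_col ht hA (by omega), card_rows_comp hc hj hjc]
  have : (Finset.Icc 1 r).card = r := by simp
  omega

lemma idx_lt_cardS (ht : IsSSYT l r t) (hA : Antitone l) (hc : ∀ i, l i ≤ c)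
    {i j : ℕ} (h1 : 1 ≤ i) (hj : 1 ≤ j) (hl : j ≤ lcomp l r c i) :
    i - 1 < (Finset.Icc 1 r \ colEntries l r t (c + 1 - j)).card := by
  have hjc : j ≤ c := le_trans hl lcomp_le_c
  have hir : i ≤ r := by
    by_contra h
    push_neg at h
    rw [lcomp_zero h] at hl
    omega
  rw [card_S ht hA hc hj hjc]
  have := card_rows_ge (lcomp_antitone hA) h1 hir hl
  omega

/-- The complement map sends SSYT of shape `λ` to SSYT of shape `λ°`. -/
lemma mapsTo (hA : ∀ i, l (i + 1) ≤ l i) (hr : ∀ i, r < i → l i = 0)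
    (hc : ∀ i, l i ≤ c) (ht : IsSSYT l r t) :
    IsSSYT (lcomp l r c) r (complMap l r c t) := by
  have hAnt : Antitone l := antitone_nat_of_succ_le hA
  refine ⟨?_, ?_, ?_, ?_⟩
  · intro i j h1 hj hl
    rw [complMap_pos ⟨h1, hj, hl⟩]
    have hk := idx_lt_cardS ht hAnt hc h1 hj hl
    have hmem := Finset.mem_sdiff.1 (sget_mem hk)
    simp only [Finset.mem_Icc] at hmem
    exact ⟨hmem.1.1, hmem.1.2⟩
  · intro i j h1 hj hl
    have hl' : j ≤ lcomp l r c i := le_trans (by omega) hl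
    have hjc : j + 1 ≤ c := le_trans hl lcomp_le_c
    rw [complMap_pos ⟨h1, hj, hl'⟩, complMap_pos ⟨h1, by omega, hl⟩]
    have hkS := idx_lt_cardS ht hAnt hc h1 hj hl'
    have hkT := idx_lt_cardS ht hAnt hc h1 (by omega) hl
    apply sget_compare ?_ hkS hkT
    intro x
    rw [cnt_sdiff (col_subset ht (by omega)), cnt_sdiff (col_subset ht (by omega))]
    apply Nat.sub_le_sub_left
    rw [cnt_col ht hAnt (by omega : 1 ≤ c + 1 - j) x,
      cnt_col ht hAnt (by omega : 1 ≤ c + 1 - (j + 1)) x]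
    apply Finset.card_le_card
    intro m hm
    rw [Finset.mem_filter, mem_rows] at hm
    obtain ⟨⟨hm1, hmr, hml⟩, hmx⟩ := hm
    rw [Finset.mem_filter, mem_rows]
    have e1 : c + 1 - (j + 1) = c - j := by omega
    have e2 : c - j + 1 = c + 1 - j := by omega
    rw [e1]
    refine ⟨⟨hm1, hmr, by omega⟩, ?_⟩
    have hrow := ht.2.1 m (c - j) hm1 (by omega) (by omega : c - j + 1 ≤ l m)
    rw [e2] at hrow
    exact le_trans hrow hmx
  · intro i j h1 hj hl
    have hli : j ≤ lcomp l r c i := le_trans hl (lcomp_antitone hAnt (Nat.le_succ i))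
    rw [complMap_pos ⟨h1, hj, hli⟩, complMap_pos ⟨by omega, hj, hl⟩]
    have hk := idx_lt_cardS ht hAnt hc (show 1 ≤ i + 1 by omega) hj hl
    have e : i + 1 - 1 = i := by omega
    rw [e] at hk ⊢
    exact sget_lt_sget (by omega) hk
  · intro i j hcond
    exact complMap_neg hcond

lemma colEntries_complMap (hA : ∀ i, l (i + 1) ≤ l i) (hr : ∀ i, r < i → l i = 0)
    (hc : ∀ i, l i ≤ c) (ht : IsSSYT l r t) {j : ℕ} (hj : 1 ≤ j) (hjc : j ≤ c) :
    colEntries (lcomp l r c) r (complMap l r c t) j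
      = Finset.Icc 1 r \ colEntries l r t (c + 1 - j) := by
  have hAnt : Antitone l := antitone_nat_of_succ_le hA
  have hu := mapsTo hA hr hc ht
  apply Finset.eq_of_subset_of_card_le
  · intro y hy
    rw [colEntries_eq, Finset.mem_image] at hy
    obtain ⟨m, hm, hmy⟩ := hy
    rw [mem_rows] at hm
    rw [← hmy, complMap_pos ⟨hm.1, hj, hm.2.2⟩]
    exact sget_mem (idx_lt_cardS ht hAnt hc hm.1 hj hm.2.2)
  · rw [card_S ht hAnt hc hj hjc, card_col hu (lcomp_antitone hAnt) hj]

/-- The complement map is an involution (up to the identification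
`(λ°)° = λ`). -/
lemma complMap_complMap (hA : ∀ i, l (i + 1) ≤ l i) (hr : ∀ i, r < i → l i = 0)
    (hc : ∀ i, l i ≤ c) (ht : IsSSYT l r t) (i j : ℕ) :
    complMap (lcomp l r c) r c (complMap l r c t) i j = t i j := by
  have hAnt : Antitone l := antitone_nat_of_succ_le hA
  by_cases hcond : 1 ≤ i ∧ 1 ≤ j ∧ j ≤ l i
  · obtain ⟨h1, hj, hl⟩ := hcond
    have hjc : j ≤ c := le_trans hl (hc i)
    have hcond' : 1 ≤ i ∧ 1 ≤ j ∧ j ≤ lcomp (lcomp l r c) r c i := by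
      rw [lcomp_lcomp hr hc h1]; exact ⟨h1, hj, hl⟩
    rw [complMap_pos hcond']
    rw [colEntries_complMap hA hr hc ht (by omega) (by omega)]
    have e : c + 1 - (c + 1 - j) = j := by omega
    rw [e, Finset.sdiff_sdiff_self_left, Finset.inter_eq_right.2 (col_subset ht hj)]
    exact sget_col ht hAnt hr h1 hj hl
  · rw [ht.2.2.2 i j hcond]
    apply complMap_neg
    intro h
    obtain ⟨h1, hj, hl⟩ := h
    rw [lcomp_lcomp hr hc h1] at hl
    exact hcond ⟨h1, hj, hl⟩

/-! ### Congruence lemmas: only the values `l i` for `i ≥ 1` matter -/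

lemma lcomp_congr {l₂ : ℕ → ℕ} (h : ∀ i, 1 ≤ i → l i = l₂ i) :
    lcomp l r c = lcomp l₂ r c := by
  funext i
  unfold lcomp
  split
  · rw [h (r + 1 - i) (by omega)]
  · rfl

lemma colEntries_congr {l₂ : ℕ → ℕ} (h : ∀ i, 1 ≤ i → l i = l₂ i) (j : ℕ) :
    colEntries l r t j = colEntries l₂ r t j := by
  unfold colEntries
  congr 1
  apply Finset.filter_congr
  intro i hi
  simp only [Finset.mem_Icc] at hi
  rw [h i hi.1]

lemma complMap_congr {l₂ : ℕ → ℕ} (h : ∀ i, 1 ≤ i → l i = l₂ i) :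
    complMap l r c t = complMap l₂ r c t := by
  funext i j
  unfold complMap
  rw [lcomp_congr h, colEntries_congr (t := t) h]

lemma IsSSYT_congr {l₂ : ℕ → ℕ} (h : ∀ i, 1 ≤ i → l i = l₂ i) (ht : IsSSYT l r t) :
    IsSSYT l₂ r t := by
  refine ⟨fun i j h1 hj hl => ht.1 i j h1 hj (by rw [h i h1]; exact hl),
    fun i j h1 hj hl => ht.2.1 i j h1 hj (by rw [h i h1]; exact hl),
    fun i j h1 hj hl => ht.2.2.1 i j h1 hj (by rw [h (i + 1) (by omega)]; exact hl),
    fun i j hcond => ht.2.2.2 i j ?_⟩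
  intro hcon
  obtain ⟨h1, hj, hl⟩ := hcon
  exact hcond ⟨h1, hj, by rw [← h i h1]; exact hl⟩

end KingAux

open KingAux in
/-- **King's bijection.** For `λ` inside the `r × c` rectangle, the
column-complement map `t ↦ t°` is a bijection from `SSYT_r(λ)` onto
`SSYT_r(λ°)`; in particular the two sets have the same cardinality. -/
theorem king_bijection (r c : ℕ) (hr0 : 0 < r) (hc0 : 0 < c) (l : ℕ → ℕ)
    (hA : ∀ i, l (i + 1) ≤ l i) (hr : ∀ i, r < i → l i = 0) (hc : ∀ i, l i ≤ c) :
    Set.BijOn (complMap l r c) {t | IsSSYT l r t}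
        {u | IsSSYT (lcomp l r c) r u} ∧
      Set.ncard {t | IsSSYT l r t} = Set.ncard {u | IsSSYT (lcomp l r c) r u} := by
  have hAnt : Antitone l := antitone_nat_of_succ_le hA
  have hA' : ∀ i, lcomp l r c (i + 1) ≤ lcomp l r c i :=
    fun i => lcomp_antitone hAnt (Nat.le_succ i)
  have hr' : ∀ i, r < i → lcomp l r c i = 0 := fun i hi => lcomp_zero hi
  have hc' : ∀ i, lcomp l r c i ≤ c := fun i => lcomp_le_c
  have hcongr : ∀ i, 1 ≤ i → lcomp (lcomp l r c) r c i = l i :=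
    fun i hi => lcomp_lcomp hr hc hi
  have hmaps' : ∀ u, IsSSYT (lcomp l r c) r u →
      IsSSYT l r (complMap (lcomp l r c) r c u) :=
    fun u hu => IsSSYT_congr hcongr (mapsTo hA' hr' hc' hu)
  have hleft : ∀ t, IsSSYT l r t →
      complMap (lcomp l r c) r c (complMap l r c t) = t := by
    intro t ht
    funext i j
    exact complMap_complMap hA hr hc ht i j
  have hright : ∀ u, IsSSYT (lcomp l r c) r u →
      complMap l r c (complMap (lcomp l r c) r c u) = u := by
    intro u hu
    rw [← complMap_congr (t := complMap (lcomp l r c) r c u) hcongr]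
    funext i j
    exact complMap_complMap hA' hr' hc' hu i j
  have hbij : Set.BijOn (complMap l r c) {t | IsSSYT l r t}
      {u | IsSSYT (lcomp l r c) r u} := by
    refine ⟨fun t ht => mapsTo hA hr hc ht, ?_, ?_⟩
    · intro t1 h1 t2 h2 heq
      have := congrArg (complMap (lcomp l r c) r c) heq
      rwa [hleft t1 h1, hleft t2 h2] at this
    · intro u hu
      exact ⟨complMap (lcomp l r c) r c u, hmaps' u hu, hright u hu⟩
  refine ⟨hbij, ?_⟩
  rw [← hbij.image_eq]
  exact (Set.ncard_image_of_injOn hbij.injOn).symm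
end

section
/- Let λ be a partition of n contained in the r × c rectangle and let λ° be its complement in the rectangle. Then s_{λ°}(q, q², …, q^r) = q^{(r+1)(rc/2 − n)} · s_λ(q, q², …, q^r), as polynomials in q (assuming rc is even, or interpreting (r+1)(rc−2n)/2 as the exponent). -/
namespace SchurCompl

open Finset

def swp (a : ℕ) (j : ℕ) : ℕ := if j = a then a + 1 else if j = a + 1 then a else j

def rho (r : ℕ) (j : ℕ) : ℕ := if 1 ≤ j ∧ j ≤ r then r + 1 - j else j

def sigmaL (L : List ℕ) : ℕ → ℕ := L.foldl (fun σ a => σ ∘ swp a) id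

def descL : ℕ → List ℕ
  | 0 => []
  | d + 1 => (d + 1) :: descL d

def TL : ℕ → List ℕ
  | 0 => []
  | d + 1 => TL d ++ descL d

def cfun (d : ℕ) (j : ℕ) : ℕ := if j = 1 then d + 1 else if j ≤ d + 1 then j - 1 else j

lemma sigma_foldl (L : List ℕ) (σ : ℕ → ℕ) :
    L.foldl (fun σ a => σ ∘ swp a) σ = σ ∘ sigmaL L := by
  induction L generalizing σ with
  | nil => rfl
  | cons b L ih =>
      show L.foldl _ (σ ∘ swp b) = _
      rw [ih (σ ∘ swp b)]
      have : sigmaL (b :: L) = (id ∘ swp b) ∘ sigmaL L := by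
        show L.foldl _ (id ∘ swp b) = _
        rw [ih (id ∘ swp b)]
      rw [this]
      rfl

lemma sigma_cons (a : ℕ) (L : List ℕ) : sigmaL (a :: L) = swp a ∘ sigmaL L := by
  show L.foldl _ (id ∘ swp a) = _
  rw [sigma_foldl]
  rfl

lemma sigma_append (L M : List ℕ) : sigmaL (L ++ M) = sigmaL L ∘ sigmaL M := by
  unfold sigmaL
  rw [List.foldl_append, sigma_foldl]
  rfl

lemma sigma_descL (d : ℕ) : sigmaL (descL d) = cfun d := by
  induction d with
  | zero =>
      funext j
      show j = cfun 0 j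
      simp only [cfun]
      split_ifs <;> omega
  | succ d ih =>
      show sigmaL ((d+1) :: descL d) = _
      rw [sigma_cons, ih]
      funext j
      simp only [Function.comp_apply, cfun, swp]
      split_ifs <;> omega

lemma sigma_TL (r : ℕ) : sigmaL (TL r) = rho r := by
  induction r with
  | zero =>
      funext j
      show j = rho 0 j
      simp only [rho]
      split_ifs <;> omega
  | succ d ih =>
      show sigmaL (TL d ++ descL d) = _
      rw [sigma_append, ih, sigma_descL]
      funext j
      simp only [Function.comp, cfun, rho]
      split_ifs <;> omega

lemma descL_mem {d a : ℕ} (h : a ∈ descL d) : 1 ≤ a ∧ a ≤ d := by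
  induction d with
  | zero => simp [descL] at h
  | succ d ih =>
      rw [descL, List.mem_cons] at h
      rcases h with h | h
      · omega
      · have := ih h; omega

lemma TL_mem {r a : ℕ} (h : a ∈ TL r) : 1 ≤ a ∧ a + 1 ≤ r := by
  induction r with
  | zero => simp [TL] at h
  | succ d ih =>
      rw [TL, List.mem_append] at h
      rcases h with h | h
      · have := ih h; omega
      · have := descL_mem h; omega

def IsGT (l : ℕ → ℕ) (r : ℕ) (p : ℕ → ℕ → ℕ) : Prop :=
  (∀ i, 1 ≤ i → p r i = l i) ∧
  (∀ k i, 1 ≤ k → k + 1 ≤ r → p k i ≤ p (k + 1) i) ∧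
  (∀ k i, 1 ≤ k → k + 1 ≤ r → 1 ≤ i → p (k + 1) (i + 1) ≤ p k i) ∧
  (∀ k i, ¬(1 ≤ k ∧ k ≤ r ∧ 1 ≤ i ∧ i ≤ k) → p k i = 0)

def tabToGT (l : ℕ → ℕ) (r : ℕ) (t : ℕ → ℕ → ℕ) (k i : ℕ) : ℕ :=
  if 1 ≤ k ∧ k ≤ r ∧ 1 ≤ i ∧ i ≤ k then
    ((Finset.Icc 1 (l i)).filter (fun j => t i j ≤ k)).card else 0

def gtToTab (l : ℕ → ℕ) (r : ℕ) (p : ℕ → ℕ → ℕ) (i j : ℕ) : ℕ :=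
  if 1 ≤ i ∧ 1 ≤ j ∧ j ≤ l i then
    1 + ((Finset.Icc 1 r).filter (fun k => p k i < j)).card else 0

/-- monotone in level `k`. -/
lemma gt_mono {l r p} (hp : IsGT l r p) {k k' i : ℕ} (h1 : 1 ≤ k) (h2 : k ≤ k')
    (h3 : k' ≤ r) : p k i ≤ p k' i := by
  induction k' with
  | zero => omega
  | succ d ih =>
      rcases Nat.eq_or_lt_of_le h2 with h | h
      · rw [h]
      · exact le_trans (ih (by omega) (by omega)) (hp.2.1 d i (by omega) (by omega))

lemma gt_le_shape {l r p} (hp : IsGT l r p) {k i : ℕ} (h1 : 1 ≤ k) (h2 : k ≤ r)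
    (h3 : 1 ≤ i) : p k i ≤ l i := by
  rw [← hp.1 i h3]; exact gt_mono hp h1 h2 le_rfl

/-- a downward-closed subset of `[1, r]` is an initial interval. -/
lemma lowerset_eq_Icc (S : Finset ℕ) (r : ℕ) (hS : S ⊆ Finset.Icc 1 r)
    (hlow : ∀ k, k + 1 ∈ S → 1 ≤ k → k ∈ S) : S = Finset.Icc 1 S.card := by
  rcases S.eq_empty_or_nonempty with h | h
  · simp [h]
  · have hmax := S.max'_mem h
    set m := S.max' h with hm
    have hsub : S ⊆ Finset.Icc 1 m := by
      intro x hx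
      have h1 := hS hx
      simp only [Finset.mem_Icc] at h1 ⊢
      exact ⟨h1.1, S.le_max' x hx⟩
    have hsup : Finset.Icc 1 m ⊆ S := by
      intro x hx
      simp only [Finset.mem_Icc] at hx
      -- downward induction from m
      have key : ∀ d x, x + d = m → 1 ≤ x → x ∈ S := by
        intro d
        induction d with
        | zero =>
            intro x hx h1
            have hxm : x = m := by omega
            rw [hxm]; exact hmax
        | succ d ih =>
            intro x hxd h1
            exact hlow x (ih (x+1) (by omega) (by omega)) h1
      exact key (m - x) x (by omega) hx.1
    have hSm : S = Finset.Icc 1 m := le_antisymm hsub hsup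
    rw [hSm, Nat.card_Icc]
    norm_num

/-- The filter set in `gtToTab` is an initial interval. -/
lemma flt_eq {l r p} (hp : IsGT l r p) (i j : ℕ) :
    ((Finset.Icc 1 r).filter (fun k => p k i < j))
      = Finset.Icc 1 ((Finset.Icc 1 r).filter (fun k => p k i < j)).card := by
  apply lowerset_eq_Icc _ r (Finset.filter_subset _ _)
  intro k hk h1
  simp only [Finset.mem_filter, Finset.mem_Icc] at hk ⊢
  refine ⟨⟨h1, by omega⟩, ?_⟩
  exact lt_of_le_of_lt (gt_mono hp h1 (by omega) (by omega)) hk.2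
/-- transitive row monotonicity for an SSYT. -/
lemma ssyt_row_mono {l r t} (ht : IsSSYT l r t) {i j j' : ℕ} (hi : 1 ≤ i)
    (hj : 1 ≤ j) (hjj : j ≤ j') (hj' : j' ≤ l i) : t i j ≤ t i j' := by
  induction j' with
  | zero => omega
  | succ d ih =>
      rcases Nat.eq_or_lt_of_le hjj with h | h
      · rw [h]
      · exact le_trans (ih (by omega) (by omega))
          (ht.2.1 i d hi (by omega) (by omega))

/-- entries of row `i` are at least `i`. -/
lemma ssyt_entry_lb {l r t} (ht : IsSSYT l r t) (hA : ∀ i, l (i + 1) ≤ l i)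
    {i j : ℕ} (hi : 1 ≤ i) (hj : 1 ≤ j) (hjl : j ≤ l i) : i ≤ t i j := by
  induction i with
  | zero => omega
  | succ d ih =>
      rcases Nat.eq_or_lt_of_le hi with h | h
      · have hd : d = 0 := by omega
        subst hd
        exact (ht.1 1 j (by omega) hj hjl).1
      · have hdl : j ≤ l d := le_trans hjl (hA d)
        have h1 := ih (by omega) hdl
        have h2 := ht.2.2.1 d j (by omega) hj hjl
        omega

/-- C1: the GT pattern of an SSYT. -/
lemma tabToGT_isGT {l r c t} (ht : IsSSYT l r t) (hA : ∀ i, l (i + 1) ≤ l i)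
    (hr : ∀ i, r < i → l i = 0) (hc : ∀ i, l i ≤ c) (hr1 : 1 ≤ r) :
    IsGT l r (tabToGT l r t) := by
  refine ⟨?_, ?_, ?_, ?_⟩
  · intro i hi
    by_cases hir : i ≤ r
    · rw [tabToGT, if_pos ⟨hr1, le_rfl, hi, hir⟩]
      rw [Finset.filter_true_of_mem, Nat.card_Icc]
      · omega
      · intro j hj
        simp only [Finset.mem_Icc] at hj
        exact (ht.1 i j hi hj.1 hj.2).2
    · rw [tabToGT, if_neg (by omega), hr i (by omega)]
  · intro k i h1 h2
    by_cases hg : 1 ≤ k ∧ k ≤ r ∧ 1 ≤ i ∧ i ≤ k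
    · rw [tabToGT, if_pos hg, tabToGT, if_pos ⟨by omega, by omega, by omega, by omega⟩]
      apply Finset.card_le_card
      intro j hj
      simp only [Finset.mem_filter] at hj ⊢
      exact ⟨hj.1, by omega⟩
    · rw [tabToGT, if_neg hg]
      exact Nat.zero_le _
  · intro k i h1 h2 h3
    by_cases hg : 1 ≤ k + 1 ∧ k + 1 ≤ r ∧ 1 ≤ i + 1 ∧ i + 1 ≤ k + 1
    · rw [tabToGT, if_pos hg, tabToGT, if_pos ⟨h1, by omega, h3, by omega⟩]
      apply Finset.card_le_card
      intro j hj
      simp only [Finset.mem_filter, Finset.mem_Icc] at hj ⊢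
      have hjl : j ≤ l i := le_trans hj.1.2 (hA i)
      have := ht.2.2.1 i j h3 (by omega) hj.1.2
      exact ⟨⟨hj.1.1, hjl⟩, by omega⟩
    · rw [tabToGT, if_neg hg]
      exact Nat.zero_le _
  · intro k i hg
    rw [tabToGT, if_neg hg]
/-- membership in the `gtToTab` filter, via initial-interval structure. -/
lemma flt_mem {l r p} (hp : IsGT l r p) {k : ℕ} (i j : ℕ) (hk1 : 1 ≤ k) (hkr : k ≤ r) :
    p k i < j ↔ k ≤ ((Finset.Icc 1 r).filter (fun k => p k i < j)).card := by
  constructor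
  · intro h
    have hmem : k ∈ (Finset.Icc 1 r).filter (fun k => p k i < j) := by
      simp only [Finset.mem_filter, Finset.mem_Icc]; exact ⟨⟨hk1, hkr⟩, h⟩
    rw [flt_eq hp i j] at hmem
    simp only [Finset.mem_Icc] at hmem
    exact hmem.2
  · intro h
    have hmem : k ∈ Finset.Icc 1 ((Finset.Icc 1 r).filter (fun k => p k i < j)).card := by
      simp only [Finset.mem_Icc]; exact ⟨hk1, h⟩
    rw [← flt_eq hp i j] at hmem
    simp only [Finset.mem_filter] at hmem
    exact hmem.2

lemma flt_card_lt {l r p} (hp : IsGT l r p) {i j : ℕ} (hi : 1 ≤ i) (hj : j ≤ l i)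
    (hr1 : 1 ≤ r) :
    ((Finset.Icc 1 r).filter (fun k => p k i < j)).card < r := by
  have hnr : ¬ (p r i < j) := by rw [hp.1 i hi]; omega
  by_contra hcon
  exact hnr ((flt_mem hp i j hr1 le_rfl).mpr (by omega))

/-- C2: the tableau of a GT pattern is an SSYT. -/
lemma gtToTab_isSSYT {l : ℕ → ℕ} {r' : ℕ} {p} (hp : IsGT l r' p)
    (hA : ∀ i, l (i + 1) ≤ l i) (hr1 : 1 ≤ r') : IsSSYT l r' (gtToTab l r' p) := by
  refine ⟨?_, ?_, ?_, ?_⟩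
  · intro i j hi hj hjl
    rw [gtToTab, if_pos ⟨hi, hj, hjl⟩]
    have := flt_card_lt hp hi hjl hr1
    omega
  · intro i j hi hj hjl
    rw [gtToTab, if_pos ⟨hi, hj, by omega⟩, gtToTab, if_pos ⟨hi, by omega, hjl⟩]
    have : ((Finset.Icc 1 r').filter (fun k => p k i < j)).card
        ≤ ((Finset.Icc 1 r').filter (fun k => p k i < j + 1)).card := by
      apply Finset.card_le_card
      intro k hk
      simp only [Finset.mem_filter] at hk ⊢
      exact ⟨hk.1, by omega⟩
    omega
  · intro i j hi hj hjl
    have hjli : j ≤ l i := le_trans hjl (hA i)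
    rw [gtToTab, if_pos ⟨hi, hj, hjli⟩, gtToTab, if_pos ⟨by omega, hj, hjl⟩]
    set a := ((Finset.Icc 1 r').filter (fun k => p k i < j)).card with ha
    have haux : a < r' := flt_card_lt hp hi hjli hr1
    have key : a + 1 ≤ ((Finset.Icc 1 r').filter (fun k => p k (i+1) < j)).card := by
      rcases Nat.eq_zero_or_pos a with h0 | h1
      · have h1m : p 1 (i + 1) < j := by
          have : p 1 (i + 1) = 0 := hp.2.2.2 1 (i+1) (by omega)
          omega
        have := (flt_mem hp (i+1) j le_rfl hr1).mp h1m
        omega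
      · have hpa : p a i < j := (flt_mem hp i j h1 (by omega)).mpr ha.le
        have := (flt_mem hp (i+1) j (by omega) (by omega)).mp
          (lt_of_le_of_lt (hp.2.2.1 a i h1 (by omega) hi) hpa)
        omega
    omega
  · intro i j hg
    rw [gtToTab, if_neg hg]

/-- C3: round trip on tableaux. -/
lemma gtToTab_tabToGT {l r t} (ht : IsSSYT l r t) (hA : ∀ i, l (i + 1) ≤ l i)
    (hr1 : 1 ≤ r) : gtToTab l r (tabToGT l r t) = t := by
  funext i j
  by_cases hcell : 1 ≤ i ∧ 1 ≤ j ∧ j ≤ l i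
  · rw [gtToTab, if_pos hcell]
    obtain ⟨hi, hj, hjl⟩ := hcell
    have htb := (ht.1 i j hi hj hjl)
    have hlb := ssyt_entry_lb ht hA hi hj hjl
    have hfe : (Finset.Icc 1 r).filter (fun k => tabToGT l r t k i < j)
        = Finset.Icc 1 (t i j - 1) := by
      ext k
      simp only [Finset.mem_filter, Finset.mem_Icc]
      constructor
      · rintro ⟨⟨hk1, hkr⟩, hlt⟩
        refine ⟨hk1, ?_⟩
        by_cases hik : i ≤ k
        · rw [tabToGT, if_pos ⟨hk1, hkr, hi, hik⟩] at hlt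
          -- card < j implies k < t i j
          by_contra hcon
          have hle : t i j ≤ k := by omega
          have hsub : Finset.Icc 1 j ⊆ (Finset.Icc 1 (l i)).filter (fun j' => t i j' ≤ k) := by
            intro j' hj'
            simp only [Finset.mem_Icc] at hj'
            simp only [Finset.mem_filter, Finset.mem_Icc]
            refine ⟨⟨hj'.1, le_trans hj'.2 hjl⟩, ?_⟩
            exact le_trans (ssyt_row_mono ht hi hj'.1 hj'.2 hjl) hle
          have := Finset.card_le_card hsub
          rw [Nat.card_Icc] at this
          omega
        · omega
      · rintro ⟨hk1, hkt⟩
        have hkr : k ≤ r := by omega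
        refine ⟨⟨hk1, hkr⟩, ?_⟩
        by_cases hik : i ≤ k
        · rw [tabToGT, if_pos ⟨hk1, hkr, hi, hik⟩]
          have hsub : (Finset.Icc 1 (l i)).filter (fun j' => t i j' ≤ k)
              ⊆ Finset.Icc 1 (j - 1) := by
            intro j' hj'
            simp only [Finset.mem_filter, Finset.mem_Icc] at hj'
            simp only [Finset.mem_Icc]
            refine ⟨hj'.1.1, ?_⟩
            by_contra hcon
            have : t i j ≤ t i j' := ssyt_row_mono ht hi hj (by omega) hj'.1.2
            omega
          have := Finset.card_le_card hsub
          rw [Nat.card_Icc] at this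
          omega
        · rw [tabToGT, if_neg (by omega)]
          omega
    rw [hfe, Nat.card_Icc]
    omega
  · rw [gtToTab, if_neg hcell, ht.2.2.2 i j hcell]

/-- C4: round trip on GT patterns. -/
lemma tabToGT_gtToTab {l r p} (hp : IsGT l r p) (hr1 : 1 ≤ r) :
    tabToGT l r (gtToTab l r p) = p := by
  funext k i
  by_cases hg : 1 ≤ k ∧ k ≤ r ∧ 1 ≤ i ∧ i ≤ k
  · rw [tabToGT, if_pos hg]
    obtain ⟨hk1, hkr, hi1, hik⟩ := hg
    have hpl : p k i ≤ l i := gt_le_shape hp hk1 hkr hi1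
    have hfe : (Finset.Icc 1 (l i)).filter (fun j => gtToTab l r p i j ≤ k)
        = Finset.Icc 1 (p k i) := by
      ext j
      simp only [Finset.mem_filter, Finset.mem_Icc]
      constructor
      · rintro ⟨⟨hj1, hjl⟩, hle⟩
        refine ⟨hj1, ?_⟩
        rw [gtToTab, if_pos ⟨hi1, hj1, hjl⟩] at hle
        by_contra hcon
        have : k ≤ ((Finset.Icc 1 r).filter (fun k' => p k' i < j)).card :=
          (flt_mem hp i j hk1 hkr).mp (by omega)
        omega
      · rintro ⟨hj1, hjp⟩
        have hjl : j ≤ l i := le_trans hjp hpl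
        refine ⟨⟨hj1, hjl⟩, ?_⟩
        rw [gtToTab, if_pos ⟨hi1, hj1, hjl⟩]
        have : ¬ (k ≤ ((Finset.Icc 1 r).filter (fun k' => p k' i < j)).card) := by
          rw [← flt_mem hp i j hk1 hkr]
          omega
        omega
    rw [hfe, Nat.card_Icc]
    omega
  · rw [tabToGT, if_neg hg, hp.2.2.2 k i hg]

/-- C5: weight of the tableau of a GT pattern. -/
lemma wt_gtToTab (l : ℕ → ℕ) (r : ℕ) (p : ℕ → ℕ → ℕ) :
    wt l r (gtToTab l r p)
      = (∑ i ∈ Finset.Icc 1 r, l i)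
        + ∑ k ∈ Finset.Icc 1 r, ∑ i ∈ Finset.Icc 1 r, (l i - p k i) := by
  rw [wt]
  have hrow : ∀ i ∈ Finset.Icc 1 r,
      ∑ j ∈ Finset.Icc 1 (l i), gtToTab l r p i j
        = l i + ∑ k ∈ Finset.Icc 1 r, (l i - p k i) := by
    intro i hi
    simp only [Finset.mem_Icc] at hi
    have hterm : ∀ j ∈ Finset.Icc 1 (l i),
        gtToTab l r p i j = 1 + ∑ k ∈ Finset.Icc 1 r, (if p k i < j then 1 else 0) := by
      intro j hj
      simp only [Finset.mem_Icc] at hj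
      rw [gtToTab, if_pos ⟨hi.1, hj.1, hj.2⟩, Finset.card_filter]
    rw [Finset.sum_congr rfl hterm, Finset.sum_add_distrib]
    congr 1
    · simp [Nat.card_Icc]
    · rw [Finset.sum_comm]
      apply Finset.sum_congr rfl
      intro k _
      have : (Finset.Icc 1 (l i)).filter (fun j => p k i < j) = Finset.Ioc (p k i) (l i) := by
        ext j
        simp only [Finset.mem_filter, Finset.mem_Icc, Finset.mem_Ioc]
        omega
      rw [← Finset.card_filter, this, Nat.card_Ioc]
  rw [Finset.sum_congr rfl hrow, Finset.sum_add_distrib, Finset.sum_comm]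
def tog (p : ℕ → ℕ → ℕ) (a : ℕ) (k i : ℕ) : ℕ :=
  if k = a ∧ 1 ≤ i ∧ i ≤ a then
    max (p (a + 1) (i + 1)) (p (a - 1) i) +
      ((if 2 ≤ i then min (p (a + 1) i) (p (a - 1) (i - 1)) else p (a + 1) i) - p a i)
  else p k i

def togL (p : ℕ → ℕ → ℕ) (L : List ℕ) : ℕ → ℕ → ℕ := L.foldl tog p

def rs (r : ℕ) (p : ℕ → ℕ → ℕ) (k : ℕ) : ℤ := ∑ i ∈ Finset.Icc 1 r, (p k i : ℤ)

def mdel (r : ℕ) (p : ℕ → ℕ → ℕ) (j : ℕ) : ℤ := rs r p j - rs r p (j - 1)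

lemma tog_row_ne {p a k i : ℕ → ℕ → ℕ → Prop} : True := trivial

lemma tog_ne {p : ℕ → ℕ → ℕ} {a k : ℕ} (h : k ≠ a) (i : ℕ) : tog p a k i = p k i := by
  rw [tog, if_neg (fun hc => h hc.1)]

lemma tog_lo {l r p} (hp : IsGT l r p) {a i : ℕ} (ha1 : 1 ≤ a) (har : a + 1 ≤ r)
    (hi1 : 1 ≤ i) (hia : i ≤ a) :
    max (p (a + 1) (i + 1)) (p (a - 1) i) ≤ p a i := by
  obtain ⟨b, rfl⟩ : ∃ b, a = b + 1 := ⟨a - 1, by omega⟩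
  simp only [Nat.add_sub_cancel]
  apply max_le
  · exact hp.2.2.1 (b+1) i ha1 har hi1
  · rcases Nat.eq_zero_or_pos b with h0 | h1
    · subst h0
      rw [hp.2.2.2 0 i (by omega)]
      exact Nat.zero_le _
    · exact hp.2.1 b i h1 (by omega)

lemma tog_hi {l r p} (hp : IsGT l r p) {a i : ℕ} (ha1 : 1 ≤ a) (har : a + 1 ≤ r)
    (hi1 : 1 ≤ i) (hia : i ≤ a) :
    p a i ≤ (if 2 ≤ i then min (p (a + 1) i) (p (a - 1) (i - 1)) else p (a + 1) i) := by
  obtain ⟨b, rfl⟩ : ∃ b, a = b + 1 := ⟨a - 1, by omega⟩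
  simp only [Nat.add_sub_cancel]
  split_ifs with h2
  · apply le_min
    · exact hp.2.1 (b+1) i ha1 har
    · obtain ⟨c, rfl⟩ : ∃ c, i = c + 2 := ⟨i - 2, by omega⟩
      have hb1 : 1 ≤ b := by omega
      have := hp.2.2.1 b (c+1) hb1 (by omega) (by omega)
      simpa using this
  · exact hp.2.1 (b+1) i ha1 har

lemma tog_value {l r p} (hp : IsGT l r p) {a i : ℕ} (ha1 : 1 ≤ a) (har : a + 1 ≤ r)
    (hi1 : 1 ≤ i) (hia : i ≤ a) :
    tog p a a i
      = max (p (a + 1) (i + 1)) (p (a - 1) i) +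
        ((if 2 ≤ i then min (p (a + 1) i) (p (a - 1) (i - 1)) else p (a + 1) i) - p a i) := by
  rw [tog, if_pos ⟨rfl, hi1, hia⟩]

lemma tog_value_lo {l r p} (hp : IsGT l r p) {a i : ℕ} (ha1 : 1 ≤ a) (har : a + 1 ≤ r)
    (hi1 : 1 ≤ i) (hia : i ≤ a) :
    max (p (a + 1) (i + 1)) (p (a - 1) i) ≤ tog p a a i := by
  rw [tog_value hp ha1 har hi1 hia]
  exact Nat.le_add_right _ _

lemma tog_value_hi {l r p} (hp : IsGT l r p) {a i : ℕ} (ha1 : 1 ≤ a) (har : a + 1 ≤ r)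
    (hi1 : 1 ≤ i) (hia : i ≤ a) :
    tog p a a i ≤ (if 2 ≤ i then min (p (a + 1) i) (p (a - 1) (i - 1)) else p (a + 1) i) := by
  rw [tog_value hp ha1 har hi1 hia]
  have h1 := tog_lo hp ha1 har hi1 hia
  have h2 := tog_hi hp ha1 har hi1 hia
  omega

lemma tog_isGT {l r p} (hp : IsGT l r p) {a : ℕ} (ha1 : 1 ≤ a) (har : a + 1 ≤ r) :
    IsGT l r (tog p a) := by
  have hane : r ≠ a := by omega
  refine ⟨?_, ?_, ?_, ?_⟩
  · intro i hi
    rw [tog_ne hane]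
    exact hp.1 i hi
  · intro k i h1 h2
    by_cases hka : k = a
    · subst hka
      rw [tog_ne (by omega : k + 1 ≠ k)]
      by_cases hg : 1 ≤ i ∧ i ≤ k
      · have := tog_value_hi hp h1 h2 hg.1 hg.2
        have h3 := min_le_left (p (k+1) i) (p (k-1) (i-1))
        split_ifs at this <;> omega
      · rw [tog, if_neg (by tauto)]
        exact hp.2.1 k i h1 h2
    · by_cases hk1a : k + 1 = a
      · rw [tog_ne hka, hk1a]
        by_cases hg : 1 ≤ i ∧ i ≤ a
        · have h5 : p (a - 1) i ≤ tog p a a i :=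
            le_trans (le_max_right _ _) (tog_value_lo hp (by omega) (by omega) hg.1 hg.2)
          have he : a - 1 = k := by omega
          rw [he] at h5
          exact h5
        · rw [tog, if_neg (by tauto)]
          have he : a = k + 1 := by omega
          rw [he]
          exact hp.2.1 k i h1 h2
      · rw [tog_ne hka, tog_ne (by omega)]
        exact hp.2.1 k i h1 h2
  · intro k i h1 h2 h3
    by_cases hka : k = a
    · subst hka
      rw [tog_ne (by omega : k + 1 ≠ k)]
      by_cases hg : i ≤ k
      · have := tog_value_lo hp h1 h2 h3 hg
        have h4 := le_max_left (p (k+1) (i+1)) (p (k-1) i)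
        omega
      · rw [tog, if_neg (by omega)]
        exact hp.2.2.1 k i h1 h2 h3
    · by_cases hk1a : k + 1 = a
      · rw [tog_ne hka, hk1a]
        by_cases hg : i + 1 ≤ a
        · have h5 := tog_value_hi hp (by omega) (by omega) (by omega : 1 ≤ i + 1) hg
          rw [if_pos (by omega : 2 ≤ i + 1)] at h5
          have h4 := min_le_right ((p (a+1) (i+1))) (p (a-1) (i+1-1))
          have h6 : tog p a a (i + 1) ≤ p (a - 1) (i + 1 - 1) := le_trans h5 h4
          have he1 : i + 1 - 1 = i := by omega
          have he2 : a - 1 = k := by omega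
          rw [he1, he2] at h6
          exact h6
        · rw [tog, if_neg (fun hc => hg hc.2.2)]
          have he : a = k + 1 := by omega
          rw [he]
          exact hp.2.2.1 k i h1 h2 h3
      · rw [tog_ne hka, tog_ne (by omega)]
        exact hp.2.2.1 k i h1 h2 h3
  · intro k i hg
    by_cases hka : k = a ∧ 1 ≤ i ∧ i ≤ a
    · exfalso
      apply hg
      obtain ⟨rfl, h1, h2⟩ := hka
      exact ⟨ha1, by omega, h1, h2⟩
    · rw [tog, if_neg hka]
      exact hp.2.2.2 k i hg

lemma tog_invol {l r p} (hp : IsGT l r p) {a : ℕ} (ha1 : 1 ≤ a) (har : a + 1 ≤ r) :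
    tog (tog p a) a = p := by
  funext k i
  by_cases hka : k = a
  · subst hka
    by_cases hg : 1 ≤ i ∧ i ≤ k
    · have hlo := tog_lo hp ha1 har hg.1 hg.2
      have hhi := tog_hi hp ha1 har hg.1 hg.2
      rw [tog, if_pos ⟨rfl, hg.1, hg.2⟩]
      rw [tog_ne (by omega : k + 1 ≠ k), tog_ne (by omega : k - 1 ≠ k),
        tog_ne (by omega : k + 1 ≠ k), tog_ne (by omega : k - 1 ≠ k),
        tog_value hp ha1 har hg.1 hg.2]
      split_ifs at * <;> omega
    · rw [tog, if_neg (by tauto), tog, if_neg (by tauto)]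
  · rw [tog_ne hka, tog_ne hka]
lemma sum_shrink (f : ℕ → ℕ) (m r : ℕ) (hmr : m ≤ r) (hz : ∀ i, m < i → f i = 0) :
    ∑ i ∈ Finset.Icc 1 r, (f i : ℤ) = ∑ i ∈ Finset.Icc 1 m, (f i : ℤ) := by
  symm
  apply Finset.sum_subset
  · exact Finset.Icc_subset_Icc le_rfl hmr
  · intro x hx hnx
    simp only [Finset.mem_Icc] at hx hnx
    rw [hz x (by omega)]
    rfl

lemma icr (g : ℕ → ℤ) (m : ℕ) :
    ∑ i ∈ Finset.Icc 1 m, g i = ∑ i ∈ Finset.range m, g (i + 1) := by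
  induction m with
  | zero => simp
  | succ d ih =>
      rw [Finset.sum_Icc_succ_top (by omega : 1 ≤ d + 1), ih, Finset.sum_range_succ]

/-- the row sums over `Icc 1 r` localize to `Icc 1 k`. -/
lemma rs_eq_range {l r p} (hp : IsGT l r p) {k : ℕ} (hk : k ≤ r) :
    rs r p k = ∑ i ∈ Finset.range k, (p k (i + 1) : ℤ) := by
  rw [rs, sum_shrink _ k r hk (fun i hi => hp.2.2.2 k i (by omega)), icr]

lemma rs_zero {l r p} (hp : IsGT l r p) : rs r p 0 = 0 := by
  rw [rs]
  apply Finset.sum_eq_zero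
  intro i _
  rw [hp.2.2.2 0 i (by omega)]
  rfl

lemma rs_tog_ne {r' : ℕ} {p : ℕ → ℕ → ℕ} {a k : ℕ} (h : k ≠ a) :
    rs r' (tog p a) k = rs r' p k := by
  rw [rs, rs]
  apply Finset.sum_congr rfl
  intro i _
  rw [tog_ne h]

/-- key rowsum identity for toggles. -/
lemma rs_tog {l r p} (hp : IsGT l r p) {a : ℕ} (ha1 : 1 ≤ a) (har : a + 1 ≤ r) :
    rs r (tog p a) a = rs r p (a - 1) + rs r p (a + 1) - rs r p a := by
  obtain ⟨b, rfl⟩ : ∃ b, a = b + 1 := ⟨a - 1, by omega⟩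
  have hq : IsGT l r (tog p (b+1)) := tog_isGT hp ha1 har
  simp only [Nat.add_sub_cancel]
  rw [rs_eq_range hq (by omega), rs_eq_range hp (by omega : b ≤ r),
    rs_eq_range hp har, rs_eq_range hp (by omega : b + 1 ≤ r)]
  set A : ℕ → ℤ := fun x => (p (b + 2) x : ℤ) with hA
  set B : ℕ → ℤ := fun x => (p b x : ℤ) with hB
  set X : ℕ → ℤ := fun x => (p (b + 1) x : ℤ) with hX
  have hval : ∀ i ∈ Finset.range (b + 1),
      ((tog p (b+1) (b+1) (i+1) : ℕ) : ℤ)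
        = max (A (i + 2)) (B (i + 1))
          + (if 1 ≤ i then min (A (i + 1)) (B i) else A 1) - X (i + 1) := by
    intro i hi
    simp only [Finset.mem_range] at hi
    have hlo := tog_lo hp (a := b + 1) (i := i + 1) ha1 har (by omega) (by omega)
    have hhi := tog_hi hp (a := b + 1) (i := i + 1) ha1 har (by omega) (by omega)
    rw [tog_value hp ha1 har (by omega) (by omega)]
    simp only [Nat.add_sub_cancel] at hlo hhi ⊢
    simp only [hA, hB, hX]
    simp only [show b + 1 + 1 = b + 2 from rfl, show i + 1 + 1 = i + 2 from rfl]
      at hlo hhi ⊢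
    by_cases h1i : 1 ≤ i
    · rw [if_pos (by omega : 2 ≤ i + 1)] at hhi ⊢
      rw [if_pos h1i]
      omega
    · have h0 : i = 0 := by omega
      subst h0
      rw [if_neg (by omega : ¬ 2 ≤ 0 + 1)] at hhi ⊢
      rw [if_neg h1i]
      simp only [show (0:ℕ) + 1 = 1 from rfl] at hlo hhi ⊢
      omega
  rw [Finset.sum_congr rfl hval]
  have hsplit : ∑ i ∈ Finset.range (b + 1),
      (max (A (i + 2)) (B (i + 1))
        + (if 1 ≤ i then min (A (i + 1)) (B i) else A 1) - X (i + 1))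
      = (∑ i ∈ Finset.range (b + 1), max (A (i + 2)) (B (i + 1)))
        + (∑ i ∈ Finset.range (b + 1), (if 1 ≤ i then min (A (i + 1)) (B i) else A 1))
        - ∑ i ∈ Finset.range (b + 1), X (i + 1) := by
    rw [← Finset.sum_add_distrib, ← Finset.sum_sub_distrib]
  rw [hsplit]
  have hmax : ∑ i ∈ Finset.range (b + 1), max (A (i + 2)) (B (i + 1))
      = (∑ i ∈ Finset.range b, max (A (i + 2)) (B (i + 1))) + A (b + 2) := by
    rw [Finset.sum_range_succ]
    congr 1
    have hz : p b (b + 1) = 0 := hp.2.2.2 b (b + 1) (by omega)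
    have : B (b + 1) = 0 := by rw [hB]; simp [hz]
    rw [this]
    exact max_eq_left (by positivity)
  have hmin : ∑ i ∈ Finset.range (b + 1), (if 1 ≤ i then min (A (i + 1)) (B i) else A 1)
      = (∑ i ∈ Finset.range b, min (A (i + 2)) (B (i + 1))) + A 1 := by
    rw [Finset.sum_range_succ']
    have h0 : (if (1:ℕ) ≤ 0 then min (A (0 + 1)) (B 0) else A 1) = A 1 :=
      if_neg (by omega)
    rw [h0]
    congr 1
  rw [hmax, hmin]
  have hpair : (∑ i ∈ Finset.range b, max (A (i + 2)) (B (i + 1)))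
      + (∑ i ∈ Finset.range b, min (A (i + 2)) (B (i + 1)))
      = (∑ i ∈ Finset.range b, A (i + 2)) + ∑ i ∈ Finset.range b, B (i + 1) := by
    rw [← Finset.sum_add_distrib, ← Finset.sum_add_distrib]
    apply Finset.sum_congr rfl
    intro i _
    exact max_add_min _ _
  have hAs : ∑ i ∈ Finset.range (b + 2), A (i + 1)
      = A 1 + (∑ i ∈ Finset.range b, A (i + 2)) + A (b + 2) := by
    rw [Finset.sum_range_succ, Finset.sum_range_succ']
    ring
  linarith [hpair, hAs]
lemma mdel_tog {l r p} (hp : IsGT l r p) {a : ℕ} (ha1 : 1 ≤ a) (har : a + 1 ≤ r) :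
    mdel r (tog p a) = fun j => mdel r p (swp a j) := by
  funext j
  by_cases hja : j = a
  · subst hja
    rw [mdel, mdel, swp, if_pos rfl, rs_tog hp ha1 har, rs_tog_ne (by omega : j - 1 ≠ j)]
    have h1 : j + 1 - 1 = j := by omega
    rw [h1]
    ring
  · by_cases hja1 : j = a + 1
    · subst hja1
      rw [mdel, mdel, swp, if_neg (by omega), if_pos rfl,
        rs_tog_ne (by omega : a + 1 ≠ a)]
      have h1 : a + 1 - 1 = a := by omega
      rw [h1, rs_tog hp ha1 har]
      have h2 : a - 1 = a - 1 := rfl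
      ring
    · rw [mdel, mdel, swp, if_neg hja, if_neg hja1,
        rs_tog_ne (by omega : j ≠ a), rs_tog_ne (by omega : j - 1 ≠ a)]

lemma togL_cons (p : ℕ → ℕ → ℕ) (a : ℕ) (L : List ℕ) :
    togL p (a :: L) = togL (tog p a) L := rfl

lemma togL_append (p : ℕ → ℕ → ℕ) (L M : List ℕ) :
    togL p (L ++ M) = togL (togL p L) M := by
  unfold togL
  rw [List.foldl_append]

lemma togL_isGT {l : ℕ → ℕ} {r' : ℕ} {L : List ℕ} :
    ∀ {p}, IsGT l r' p → (∀ a ∈ L, 1 ≤ a ∧ a + 1 ≤ r') → IsGT l r' (togL p L) := by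
  induction L with
  | nil => intro p hp _; exact hp
  | cons a L ih =>
      intro p hp hL
      rw [togL_cons]
      exact ih (tog_isGT hp (hL a (by simp)).1 (hL a (by simp)).2)
        (fun b hb => hL b (by simp [hb]))

lemma togL_reverse {l : ℕ → ℕ} {r' : ℕ} {L : List ℕ} :
    ∀ {p}, IsGT l r' p → (∀ a ∈ L, 1 ≤ a ∧ a + 1 ≤ r') →
      togL (togL p L) L.reverse = p := by
  induction L with
  | nil => intro p hp _; rfl
  | cons a L ih =>
      intro p hp hL
      have ha := hL a (by simp)
      rw [togL_cons, List.reverse_cons, togL_append,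
        ih (tog_isGT hp ha.1 ha.2) (fun b hb => hL b (by simp [hb]))]
      show tog (tog p a) a = p
      exact tog_invol hp ha.1 ha.2

/-- telescoping: the partial sums of `mdel` recover the row sums. -/
lemma mdel_telescope {l r p} (hp : IsGT l r p) (k : ℕ) :
    ∑ j ∈ Finset.Icc 1 k, mdel r p j = rs r p k := by
  induction k with
  | zero => simp [rs_zero hp]
  | succ d ih =>
      rw [Finset.sum_Icc_succ_top (by omega : 1 ≤ d + 1), ih, mdel]
      have h1 : d + 1 - 1 = d := by omega
      rw [h1]
      ring

/-- the fundamental invariant: toggles permute the level increments. -/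
lemma togL_rowsum {l : ℕ → ℕ} {r' : ℕ} {L : List ℕ} :
    ∀ {p}, IsGT l r' p → (∀ a ∈ L, 1 ≤ a ∧ a + 1 ≤ r') → ∀ k,
      rs r' (togL p L) k = ∑ j ∈ Finset.Icc 1 k, mdel r' p (sigmaL L j) := by
  induction L with
  | nil =>
      intro p hp _ k
      show rs r' p k = _
      rw [← mdel_telescope hp k]
      apply Finset.sum_congr rfl
      intro j _
      rfl
  | cons a L ih =>
      intro p hp hL k
      have ha := hL a (by simp)
      rw [togL_cons, ih (tog_isGT hp ha.1 ha.2) (fun b hb => hL b (by simp [hb])) k]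
      apply Finset.sum_congr rfl
      intro j _
      rw [mdel_tog hp ha.1 ha.2, sigma_cons]
      rfl
def rotGT (c r : ℕ) (p : ℕ → ℕ → ℕ) (k i : ℕ) : ℕ :=
  if 1 ≤ k ∧ k ≤ r ∧ 1 ≤ i ∧ i ≤ k then c - p k (k + 1 - i) else 0

lemma gt_congr {l l' : ℕ → ℕ} {r p} (h : ∀ i, 1 ≤ i → l i = l' i) (hp : IsGT l r p) :
    IsGT l' r p := by
  refine ⟨?_, hp.2.1, hp.2.2.1, hp.2.2.2⟩
  intro i hi
  rw [hp.1 i hi, h i hi]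

lemma rot_isGT {s : ℕ → ℕ} {r c : ℕ} {p} (hp : IsGT s r p)
    (hsc : ∀ i, 1 ≤ i → s i ≤ c) : IsGT (lcomp s r c) r (rotGT c r p) := by
  refine ⟨?_, ?_, ?_, ?_⟩
  · intro i hi
    by_cases hir : i ≤ r
    · have h1 : 1 ≤ r + 1 - i := by omega
      rw [rotGT, if_pos ⟨by omega, le_rfl, hi, hir⟩, lcomp, if_pos hir,
        hp.1 (r + 1 - i) h1]
    · rw [rotGT, if_neg (by omega), lcomp, if_neg hir]
  · intro k i h1 h2
    by_cases hik : 1 ≤ i ∧ i ≤ k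
    · rw [rotGT, if_pos ⟨h1, by omega, hik.1, hik.2⟩,
        rotGT, if_pos ⟨by omega, h2, hik.1, by omega⟩]
      have he : k + 1 + 1 - i = (k + 1 - i) + 1 := by omega
      rw [he]
      have := hp.2.2.1 k (k + 1 - i) h1 h2 (by omega)
      omega
    · rw [rotGT, if_neg (by omega)]
      exact Nat.zero_le _
  · intro k i h1 h2 h3
    by_cases hik : i ≤ k
    · rw [rotGT, if_pos ⟨by omega, h2, by omega, by omega⟩,
        rotGT, if_pos ⟨h1, by omega, h3, hik⟩]
      have he : k + 1 + 1 - (i + 1) = k + 1 - i := by omega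
      rw [he]
      have := hp.2.1 k (k + 1 - i) h1 h2
      omega
    · rw [rotGT, if_neg (by omega)]
      exact Nat.zero_le _
  · intro k i hg
    rw [rotGT, if_neg hg]

lemma gt_le_c {s : ℕ → ℕ} {r c : ℕ} {p} (hp : IsGT s r p)
    (hsc : ∀ i, 1 ≤ i → s i ≤ c) {k i : ℕ} (hk1 : 1 ≤ k) (hkr : k ≤ r) (hi : 1 ≤ i) :
    p k i ≤ c :=
  le_trans (gt_le_shape hp hk1 hkr hi) (hsc i hi)

lemma rot_rot {s : ℕ → ℕ} {r c : ℕ} {p} (hp : IsGT s r p)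
    (hsc : ∀ i, 1 ≤ i → s i ≤ c) : rotGT c r (rotGT c r p) = p := by
  funext k i
  by_cases hg : 1 ≤ k ∧ k ≤ r ∧ 1 ≤ i ∧ i ≤ k
  · rw [rotGT, if_pos hg, rotGT, if_pos ⟨hg.1, hg.2.1, by omega, by omega⟩]
    have he : k + 1 - (k + 1 - i) = i := by omega
    rw [he]
    have := gt_le_c hp hsc hg.1 hg.2.1 hg.2.2.1
    omega
  · rw [rotGT, if_neg hg, hp.2.2.2 k i hg]

lemma sum_reflect (f : ℕ → ℤ) (m : ℕ) :
    ∑ i ∈ Finset.Icc 1 m, f (m + 1 - i) = ∑ i ∈ Finset.Icc 1 m, f i := by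
  apply Finset.sum_nbij' (i := fun x => m + 1 - x) (j := fun x => m + 1 - x)
  · intro a ha
    simp only [Finset.mem_Icc] at ha ⊢
    omega
  · intro a ha
    simp only [Finset.mem_Icc] at ha ⊢
    omega
  · intro a ha
    simp only [Finset.mem_Icc] at ha
    omega
  · intro a ha
    simp only [Finset.mem_Icc] at ha
    omega
  · intro a _
    rfl

lemma rs_rot {s : ℕ → ℕ} {r c : ℕ} {p} (hp : IsGT s r p)
    (hsc : ∀ i, 1 ≤ i → s i ≤ c) {k : ℕ} (hk1 : 1 ≤ k) (hkr : k ≤ r) :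
    rs r (rotGT c r p) k = k * c - rs r p k := by
  have hrot : IsGT (lcomp s r c) r (rotGT c r p) := rot_isGT hp hsc
  have hz1 : ∀ i, k < i → rotGT c r p k i = 0 := by
    intro i hi
    exact hrot.2.2.2 k i (by omega)
  have hz2 : ∀ i, k < i → p k i = 0 := by
    intro i hi
    exact hp.2.2.2 k i (by omega)
  rw [rs, sum_shrink _ k r hkr hz1, rs, sum_shrink _ k r hkr hz2]
  have hterm : ∀ i ∈ Finset.Icc 1 k,
      ((rotGT c r p k i : ℕ) : ℤ) = (c : ℤ) - (p k (k + 1 - i) : ℤ) := by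
    intro i hi
    simp only [Finset.mem_Icc] at hi
    rw [rotGT, if_pos ⟨hk1, hkr, hi.1, hi.2⟩]
    have := gt_le_c hp hsc hk1 hkr (by omega : 1 ≤ k + 1 - i)
    omega
  rw [Finset.sum_congr rfl hterm, Finset.sum_sub_distrib]
  have : ∑ i ∈ Finset.Icc 1 k, (p k (k + 1 - i) : ℤ)
      = ∑ i ∈ Finset.Icc 1 k, (p k i : ℤ) := sum_reflect (fun x => (p k x : ℤ)) k
  rw [this]
  simp [Nat.card_Icc, mul_comm]
lemma lcomp_antitone {l : ℕ → ℕ} {r c : ℕ} (hA : ∀ i, l (i + 1) ≤ l i)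
    (hc : ∀ i, l i ≤ c) : ∀ i, lcomp l r c (i + 1) ≤ lcomp l r c i := by
  intro i
  rw [lcomp, lcomp]
  by_cases h1 : i + 1 ≤ r
  · rw [if_pos h1, if_pos (by omega)]
    have h2 := hA (r - i)
    have he : r - i + 1 = r + 1 - i := by omega
    have he2 : r + 1 - (i + 1) = r - i := by omega
    rw [he] at h2
    rw [he2]
    omega
  · rw [if_neg h1]
    exact Nat.zero_le _

lemma lcomp_zero {l : ℕ → ℕ} {r c : ℕ} : ∀ i, r < i → lcomp l r c i = 0 := by
  intro i hi
  rw [lcomp, if_neg (by omega)]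

lemma lcomp_le {l : ℕ → ℕ} {r c : ℕ} : ∀ i, lcomp l r c i ≤ c := by
  intro i
  rw [lcomp]
  split_ifs
  · omega
  · omega

lemma lcomp_lcomp {l : ℕ → ℕ} {r c : ℕ} (hr : ∀ i, r < i → l i = 0)
    (hc : ∀ i, l i ≤ c) : ∀ i, 1 ≤ i → lcomp (lcomp l r c) r c i = l i := by
  intro i hi
  by_cases hir : i ≤ r
  · rw [lcomp, if_pos hir, lcomp, if_pos (by omega)]
    have he : r + 1 - (r + 1 - i) = i := by omega
    rw [he]
    have := hc i
    omega
  · rw [lcomp, if_neg hir, hr i (by omega)]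

lemma sum_lcomp {l : ℕ → ℕ} {r c n : ℕ} (hc : ∀ i, l i ≤ c)
    (hn : ∑ i ∈ Finset.Icc 1 r, l i = n) :
    ∑ i ∈ Finset.Icc 1 r, (lcomp l r c i : ℤ) = (r : ℤ) * c - n := by
  have hterm : ∀ i ∈ Finset.Icc 1 r,
      (lcomp l r c i : ℤ) = (c : ℤ) - (l (r + 1 - i) : ℤ) := by
    intro i hi
    simp only [Finset.mem_Icc] at hi
    rw [lcomp, if_pos hi.2]
    have := hc (r + 1 - i)
    omega
  rw [Finset.sum_congr rfl hterm, Finset.sum_sub_distrib,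
    sum_reflect (fun x => (l x : ℤ)) r]
  have h1 : ∑ i ∈ Finset.Icc 1 r, (l i : ℤ) = (n : ℤ) := by
    rw [← hn]
    push_cast
    rfl
  rw [h1]
  simp [Nat.card_Icc, mul_comm]

lemma ssyt_finite (s : ℕ → ℕ) (r c : ℕ) (hr : ∀ i, r < i → s i = 0)
    (hc : ∀ i, s i ≤ c) : {t : ℕ → ℕ → ℕ | IsSSYT s r t}.Finite := by
  apply Set.Finite.of_finite_image
    (f := fun t => fun (i : Fin (r + 1)) (j : Fin (c + 1)) =>
      (⟨min (t i j) r, by omega⟩ : Fin (r + 1)))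
  · exact Set.Finite.subset (Set.finite_univ) (Set.subset_univ _)
  · intro t₁ h₁ t₂ h₂ heq
    funext i j
    by_cases hcell : 1 ≤ i ∧ 1 ≤ j ∧ j ≤ s i
    · have hir : i ≤ r := by
        by_contra hcon
        have := hr i (by omega)
        omega
      have hjc : j ≤ c := le_trans hcell.2.2 (hc i)
      have e1 := congrFun (congrFun heq ⟨i, by omega⟩) ⟨j, by omega⟩
      simp only [Fin.mk.injEq] at e1
      have b1 := (h₁.1 i j hcell.1 hcell.2.1 hcell.2.2).2
      have b2 := (h₂.1 i j hcell.1 hcell.2.1 hcell.2.2).2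
      simpa [min_eq_left b1, min_eq_left b2] using e1
    · rw [h₁.2.2.2 i j hcell, h₂.2.2.2 i j hcell]

lemma gauss (r : ℕ) : 2 * (∑ i ∈ Finset.Icc 1 r, (i : ℤ)) = (r : ℤ) * (r + 1) := by
  induction r with
  | zero => simp
  | succ d ih =>
      rw [Finset.sum_Icc_succ_top (by omega : 1 ≤ d + 1)]
      push_cast
      push_cast at ih
      linarith

lemma exp_even (r c n : ℕ) :
    2 * ((((r : ℤ) + 1) * ((r : ℤ) * c - 2 * n)) / 2)
      = ((r : ℤ) + 1) * ((r : ℤ) * c - 2 * n) := by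
  rw [mul_comm]
  apply Int.ediv_mul_cancel
  rcases Int.even_or_odd (r : ℤ) with ⟨m, hm⟩ | ⟨m, hm⟩
  · exact ⟨((r : ℤ) + 1) * (m * c - n), by rw [hm]; ring⟩
  · exact ⟨(m + 1) * ((r : ℤ) * c - 2 * n), by rw [hm]; ring⟩

/-- cast version of the weight formula. -/
lemma wtz {l : ℕ → ℕ} {r : ℕ} {p} (hp : IsGT l r p) :
    (wt l r (gtToTab l r p) : ℤ)
      = (∑ i ∈ Finset.Icc 1 r, (l i : ℤ))
        + ∑ k ∈ Finset.Icc 1 r, ((∑ i ∈ Finset.Icc 1 r, (l i : ℤ)) - rs r p k) := by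
  rw [wt_gtToTab]
  push_cast
  congr 1
  apply Finset.sum_congr rfl
  intro k hk
  simp only [Finset.mem_Icc] at hk
  rw [rs, ← Finset.sum_sub_distrib]
  apply Finset.sum_congr rfl
  intro i hi
  simp only [Finset.mem_Icc] at hi
  have := gt_le_shape hp hk.1 hk.2 hi.1
  omega

lemma Icc_succ_Ioc (a b : ℕ) : Finset.Icc (a + 1) b = Finset.Ioc a b := by
  ext x
  simp only [Finset.mem_Icc, Finset.mem_Ioc]
  omega

lemma sum_reflect' (f : ℕ → ℤ) (k r : ℕ) (hkr : k ≤ r) :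
    ∑ j ∈ Finset.Icc 1 k, f (r + 1 - j) = ∑ j ∈ Finset.Icc (r + 1 - k) r, f j := by
  apply Finset.sum_nbij' (i := fun x => r + 1 - x) (j := fun x => r + 1 - x)
  · intro a ha
    simp only [Finset.mem_Icc] at ha ⊢
    omega
  · intro a ha
    simp only [Finset.mem_Icc] at ha ⊢
    omega
  · intro a ha
    simp only [Finset.mem_Icc] at ha
    omega
  · intro a ha
    simp only [Finset.mem_Icc] at ha
    omega
  · intro a _
    rfl

/-- partial sums of the reversed increments. -/
lemma rho_sum {l : ℕ → ℕ} {r : ℕ} {p} (hp : IsGT l r p) {k : ℕ} (hk : k ≤ r) :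
    ∑ j ∈ Finset.Icc 1 k, mdel r p (rho r j) = rs r p r - rs r p (r - k) := by
  have hterm : ∀ j ∈ Finset.Icc 1 k, mdel r p (rho r j) = mdel r p (r + 1 - j) := by
    intro j hj
    simp only [Finset.mem_Icc] at hj
    rw [rho, if_pos ⟨hj.1, by omega⟩]
  rw [Finset.sum_congr rfl hterm, sum_reflect' (mdel r p) k r hk]
  have he : r + 1 - k = (r - k) + 1 := by omega
  rw [he, Icc_succ_Ioc]
  have hsplit := Finset.sum_Ioc_consecutive (f := mdel r p)
    (by omega : (0:ℕ) ≤ r - k) (by omega : r - k ≤ r)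
  have t1 : ∑ j ∈ Finset.Ioc 0 (r - k), mdel r p j = rs r p (r - k) := by
    rw [← Icc_succ_Ioc]
    exact mdel_telescope hp (r - k)
  have t2 : ∑ j ∈ Finset.Ioc 0 r, mdel r p j = rs r p r := by
    rw [← Icc_succ_Ioc]
    exact mdel_telescope hp r
  omega
lemma weight_key {l : ℕ → ℕ} {r c n : ℕ} {p} (hp : IsGT l r p)
    (hc : ∀ i, l i ≤ c) (hn : ∑ i ∈ Finset.Icc 1 r, l i = n) :
    (wt (lcomp l r c) r (gtToTab (lcomp l r c) r (rotGT c r (togL p (TL r)))) : ℤ)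
      = (((r : ℤ) + 1) * ((r : ℤ) * c - 2 * n)) / 2 + (wt l r (gtToTab l r p) : ℤ) := by
  have hTL : ∀ a ∈ TL r, 1 ≤ a ∧ a + 1 ≤ r := fun a ha => TL_mem ha
  have hsc : ∀ i, 1 ≤ i → l i ≤ c := fun i _ => hc i
  have hp' : IsGT l r (togL p (TL r)) := togL_isGT hp hTL
  have hu : IsGT (lcomp l r c) r (rotGT c r (togL p (TL r))) := rot_isGT hp' hsc
  rw [wtz hu, wtz hp, sum_lcomp hc hn]
  have hlz : ∑ i ∈ Finset.Icc 1 r, (l i : ℤ) = (n : ℤ) := by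
    rw [← hn]
    push_cast
    rfl
  rw [hlz]
  have hpn : rs r p r = (n : ℤ) := by
    rw [rs, ← hlz]
    apply Finset.sum_congr rfl
    intro i hi
    simp only [Finset.mem_Icc] at hi
    rw [hp.1 i hi.1]
  have hterm : ∀ k ∈ Finset.Icc 1 r,
      ((r : ℤ) * c - n) - rs r (rotGT c r (togL p (TL r))) k
        = (((r : ℤ) * c - n) + n) - (k : ℤ) * c - rs r p (r - k) := by
    intro k hk
    simp only [Finset.mem_Icc] at hk
    rw [rs_rot hp' hsc hk.1 hk.2]
    have h1 := togL_rowsum hp hTL k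
    rw [sigma_TL] at h1
    rw [h1, rho_sum hp hk.2, hpn]
    ring
  rw [Finset.sum_congr rfl hterm]
  have hsplit : ∑ k ∈ Finset.Icc 1 r, ((((r : ℤ) * c - n) + n) - (k : ℤ) * c - rs r p (r - k))
      = (r : ℤ) * (((r : ℤ) * c - n) + n) - (∑ k ∈ Finset.Icc 1 r, (k : ℤ)) * c
        - ∑ k ∈ Finset.Icc 1 r, rs r p (r - k) := by
    rw [Finset.sum_sub_distrib, Finset.sum_sub_distrib, Finset.sum_const, Nat.card_Icc,
      ← Finset.sum_mul]
    simp only [Nat.add_sub_cancel, nsmul_eq_mul]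
  have hT : ∑ k ∈ Finset.Icc 1 r, rs r p (r - k)
      = (∑ k ∈ Finset.Icc 1 r, rs r p k) - n := by
    have h1 : ∀ k ∈ Finset.Icc 1 r,
        rs r p (r - k) = (fun x => rs r p (x - 1)) (r + 1 - k) := by
      intro k hk
      simp only [Finset.mem_Icc] at hk
      simp only
      congr 1
      omega
    rw [Finset.sum_congr rfl h1, sum_reflect (fun x => rs r p (x - 1)) r]
    have h2 := mdel_telescope hp r
    rw [hpn] at h2
    have h3 : ∑ k ∈ Finset.Icc 1 r, mdel r p k
        = ∑ k ∈ Finset.Icc 1 r, (rs r p k - rs r p (k - 1)) := rfl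
    rw [h3, Finset.sum_sub_distrib] at h2
    linarith
  have hsum2 : ∑ k ∈ Finset.Icc 1 r, ((n : ℤ) - rs r p k)
      = (r : ℤ) * n - ∑ k ∈ Finset.Icc 1 r, rs r p k := by
    rw [Finset.sum_sub_distrib, Finset.sum_const, Nat.card_Icc]
    simp only [Nat.add_sub_cancel, nsmul_eq_mul]
  have hG := gauss r
  have hE := exp_even r c n
  rw [hsplit, hT, hsum2]
  apply mul_left_cancel₀ (two_ne_zero (α := ℤ))
  linear_combination (-1 : ℤ) * hE - (c : ℤ) * hG
end SchurCompl

/-- **Principal specialization of the complementary Schur polynomial.** For a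
partition `λ` of `n` inside the `r × c` rectangle,
`s_{λ°}(q, q², …, q^r) = q^{(r+1)(rc/2 - n)} · s_λ(q, q², …, q^r)`, where the
exponent is the (always even) integer `(r+1)(rc - 2n)/2`. -/
theorem schur_complement_specialization (r c n : ℕ) (hr0 : 0 < r) (hc0 : 0 < c)
    (l : ℕ → ℕ)
    (hA : ∀ i, l (i + 1) ≤ l i) (hr : ∀ i, r < i → l i = 0) (hc : ∀ i, l i ≤ c)
    (hn : ∑ i ∈ Finset.Icc 1 r, l i = n)
    (q : ℂ) (hq : q ≠ 0) :
    (∑ᶠ u ∈ {u : ℕ → ℕ → ℕ | IsSSYT (lcomp l r c) r u}, q ^ wt (lcomp l r c) r u) =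
      q ^ ((((r : ℤ) + 1) * ((r : ℤ) * c - 2 * n)) / 2) *
        ∑ᶠ t ∈ {t : ℕ → ℕ → ℕ | IsSSYT l r t}, q ^ wt l r t := by
  classical
  have hr1 : 1 ≤ r := hr0
  have hA' : ∀ i, lcomp l r c (i + 1) ≤ lcomp l r c i := SchurCompl.lcomp_antitone hA hc
  have hr' : ∀ i, r < i → lcomp l r c i = 0 := fun i hi => SchurCompl.lcomp_zero i hi
  have hc' : ∀ i, lcomp l r c i ≤ c := fun i => SchurCompl.lcomp_le i
  have hsc : ∀ i, 1 ≤ i → l i ≤ c := fun i _ => hc i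
  have hsc' : ∀ i, 1 ≤ i → lcomp l r c i ≤ c := fun i _ => hc' i
  have hTL : ∀ a ∈ SchurCompl.TL r, 1 ≤ a ∧ a + 1 ≤ r := fun a ha => SchurCompl.TL_mem ha
  have hTLrev : ∀ a ∈ (SchurCompl.TL r).reverse, 1 ≤ a ∧ a + 1 ≤ r := by
    intro a ha
    exact hTL a (List.mem_reverse.mp ha)
  have hFinA : {u : ℕ → ℕ → ℕ | IsSSYT (lcomp l r c) r u}.Finite :=
    SchurCompl.ssyt_finite _ r c hr' hc'
  have hFinB : {t : ℕ → ℕ → ℕ | IsSSYT l r t}.Finite :=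
    SchurCompl.ssyt_finite _ r c hr hc
  rw [finsum_mem_eq_finite_toFinset_sum _ hFinA, finsum_mem_eq_finite_toFinset_sum _ hFinB,
    Finset.mul_sum]
  symm
  apply Finset.sum_nbij'
    (i := fun t => SchurCompl.gtToTab (lcomp l r c) r
      (SchurCompl.rotGT c r (SchurCompl.togL (SchurCompl.tabToGT l r t) (SchurCompl.TL r))))
    (j := fun u => SchurCompl.gtToTab l r
      (SchurCompl.togL (SchurCompl.rotGT c r (SchurCompl.tabToGT (lcomp l r c) r u))
        ((SchurCompl.TL r).reverse)))
  · intro t ht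
    rw [Set.Finite.mem_toFinset] at ht ⊢
    have hp : SchurCompl.IsGT l r (SchurCompl.tabToGT l r t) := SchurCompl.tabToGT_isGT ht hA hr hc hr1
    exact SchurCompl.gtToTab_isSSYT
      (SchurCompl.rot_isGT (SchurCompl.togL_isGT hp hTL) hsc) hA' hr1
  · intro u hu
    rw [Set.Finite.mem_toFinset] at hu ⊢
    have hq' : SchurCompl.IsGT (lcomp l r c) r (SchurCompl.tabToGT (lcomp l r c) r u) :=
      SchurCompl.tabToGT_isGT hu hA' hr' hc' hr1
    have hrot : SchurCompl.IsGT l r (SchurCompl.rotGT c r (SchurCompl.tabToGT (lcomp l r c) r u)) :=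
      SchurCompl.gt_congr (SchurCompl.lcomp_lcomp hr hc) (SchurCompl.rot_isGT hq' hsc')
    exact SchurCompl.gtToTab_isSSYT (SchurCompl.togL_isGT hrot hTLrev) hA hr1
  · intro t ht
    rw [Set.Finite.mem_toFinset] at ht
    have hp : SchurCompl.IsGT l r (SchurCompl.tabToGT l r t) := SchurCompl.tabToGT_isGT ht hA hr hc hr1
    have hp' : SchurCompl.IsGT l r (SchurCompl.togL (SchurCompl.tabToGT l r t) (SchurCompl.TL r)) :=
      SchurCompl.togL_isGT hp hTL
    have step1 := SchurCompl.tabToGT_gtToTab (SchurCompl.rot_isGT hp' hsc) hr1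
    have step2 := SchurCompl.rot_rot hp' hsc
    have step3 := SchurCompl.togL_reverse hp hTL
    have step4 := SchurCompl.gtToTab_tabToGT ht hA hr1
    rw [step1, step2, step3, step4]
  · intro u hu
    rw [Set.Finite.mem_toFinset] at hu
    have hq' : SchurCompl.IsGT (lcomp l r c) r (SchurCompl.tabToGT (lcomp l r c) r u) :=
      SchurCompl.tabToGT_isGT hu hA' hr' hc' hr1
    have hrot : SchurCompl.IsGT l r (SchurCompl.rotGT c r (SchurCompl.tabToGT (lcomp l r c) r u)) :=
      SchurCompl.gt_congr (SchurCompl.lcomp_lcomp hr hc) (SchurCompl.rot_isGT hq' hsc')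
    have htt : SchurCompl.IsGT l r (SchurCompl.togL (SchurCompl.rotGT c r (SchurCompl.tabToGT (lcomp l r c) r u))
        ((SchurCompl.TL r).reverse)) := SchurCompl.togL_isGT hrot hTLrev
    have s1 := SchurCompl.tabToGT_gtToTab htt hr1
    have s2 := SchurCompl.togL_reverse hrot hTLrev
    rw [List.reverse_reverse] at s2
    have s3 := SchurCompl.rot_rot hq' hsc'
    have s4 := SchurCompl.gtToTab_tabToGT hu hA' hr1
    rw [s1, s2, s3, s4]
  · intro t ht
    rw [Set.Finite.mem_toFinset] at ht
    have hp : SchurCompl.IsGT l r (SchurCompl.tabToGT l r t) := SchurCompl.tabToGT_isGT ht hA hr hc hr1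
    have hkey := SchurCompl.weight_key hp hc hn
    rw [SchurCompl.gtToTab_tabToGT ht hA hr1] at hkey
    calc q ^ ((((r : ℤ) + 1) * ((r : ℤ) * c - 2 * n)) / 2) * q ^ wt l r t
        = q ^ ((((r : ℤ) + 1) * ((r : ℤ) * c - 2 * n)) / 2) * q ^ ((wt l r t : ℕ) : ℤ) := by
          rw [zpow_natCast]
      _ = q ^ (((((r : ℤ) + 1) * ((r : ℤ) * c - 2 * n)) / 2) + ((wt l r t : ℕ) : ℤ)) := by
          rw [zpow_add₀ hq]
      _ = q ^ ((wt (lcomp l r c) r (SchurCompl.gtToTab (lcomp l r c) r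
            (SchurCompl.rotGT c r (SchurCompl.togL (SchurCompl.tabToGT l r t) (SchurCompl.TL r)))) : ℕ) : ℤ) := by
          rw [← hkey]
      _ = _ := by rw [zpow_natCast]
end

section
/- Let λ be a partition with ℓ(λ) ≤ r and λ₁ ≤ c, D the r × c rectangle. Then the following identity of rational functions in q holds: ∏_{(i,j) ∈ D \ [λ]} (q^{d_{(i,j)}(λ)} − 1)/(q^{h_{(i,j)}(λ)} − 1) = ∏_{(i,j) ∈ [λ]} (q^{d_{(i,j)}(λ)} − 1)/(q^{h_{(i,j)}(λ)} − 1), where hooks of boxes in [λ] are standard hooks, hooks of boxes outside are complementary hooks, and distances are as defined. -/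
/-! ### Auxiliary machinery -/

open Finset

/-- The "first-column hook length" (beta-number) of row `i`. -/
def aN (l : ℕ → ℕ) (r i : ℕ) : ℕ := l i + (r - i)

/-- The pairs `1 ≤ i < i' ≤ r`. -/
def pairsS (r : ℕ) : Finset (ℕ × ℕ) :=
  ((Icc 1 r) ×ˢ (Icc 1 r)).filter fun p => p.1 < p.2

lemma aN_lt (l : ℕ → ℕ) (r : ℕ) (lm : ∀ u v, u ≤ v → l v ≤ l u)
    {u v : ℕ} (huv : u < v) (hv : v ≤ r) : aN l r v < aN l r u := by
  have := lm u v huv.le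
  unfold aN; omega

lemma cells_prod (l : ℕ → ℕ) (r c : ℕ) (hc : ∀ i, l i ≤ c) (f : ℕ → ℕ → ℂ) :
    ∏ p ∈ cells l r c, f p.1 p.2 = ∏ i ∈ Icc 1 r, ∏ j ∈ Icc 1 (l i), f i j := by
  unfold cells rect
  rw [Finset.prod_filter, Finset.prod_product]
  refine Finset.prod_congr rfl fun i _ => ?_
  rw [← Finset.prod_filter]
  congr 1
  ext j
  simp only [Finset.mem_filter, Finset.mem_Icc]
  have := hc i; omega

lemma pairs_prod (r : ℕ) (F : ℕ → ℕ → ℂ) :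
    ∏ p ∈ pairsS r, F p.1 p.2 = ∏ i ∈ Icc 1 r, ∏ i' ∈ Icc (i+1) r, F i i' := by
  unfold pairsS
  rw [Finset.prod_filter, Finset.prod_product]
  refine Finset.prod_congr rfl fun i _ => ?_
  rw [← Finset.prod_filter]
  congr 1
  ext j
  simp only [Finset.mem_filter, Finset.mem_Icc]
  omega

/-- The classical row hook-length factorization: the hook lengths of row `i`
together with the differences of first-column hooks form `{1, …, aN i}`. -/
lemma row_lemma (l : ℕ → ℕ) (r i : ℕ) (q : ℂ)
    (lm : ∀ u v, u ≤ v → l v ≤ l u) (hir : i ≤ r) :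
    (∏ j ∈ Icc 1 (l i), (q ^ hin l r i j - 1)) *
      (∏ i' ∈ Icc (i+1) r, (q ^ (aN l r i - aN l r i') - 1)) =
    ∏ k ∈ Icc 1 (aN l r i), (q ^ k - 1) := by
  set g : ℕ → ℂ := fun k => q ^ k - 1 with hg
  have hcard : ∀ j : ℕ, ((Icc (i+1) r).filter (fun i' => j ≤ l i')).card ≤ r - i := by
    intro j
    have := Finset.card_le_card (Finset.filter_subset (fun i' => j ≤ l i') (Icc (i+1) r))
    simp only [Nat.card_Icc] at this
    omega
  have hlow : ∀ j i', i < i' → i' ≤ r → j ≤ l i' →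
      i' - i ≤ ((Icc (i+1) r).filter (fun i' => j ≤ l i')).card := by
    intro j i' hii hir' hj
    have hsub : Icc (i+1) i' ⊆ (Icc (i+1) r).filter (fun i' => j ≤ l i') := by
      intro x hx
      simp only [mem_Icc] at hx
      simp only [mem_filter, mem_Icc]
      have := lm x i' hx.2
      omega
    have := Finset.card_le_card hsub
    simp only [Nat.card_Icc] at this
    omega
  have hhigh : ∀ j i', i < i' → i' ≤ r → l i' < j →
      ((Icc (i+1) r).filter (fun i' => j ≤ l i')).card ≤ i' - i - 1 := by
    intro j i' hii hir' hj
    have hsub : (Icc (i+1) r).filter (fun i' => j ≤ l i') ⊆ Icc (i+1) (i'-1) := by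
      intro x hx
      simp only [mem_filter, mem_Icc] at hx
      simp only [mem_Icc]
      rcases le_or_gt i' x with h | h
      · have := lm i' x h; omega
      · omega
    have := Finset.card_le_card hsub
    simp only [Nat.card_Icc] at this
    omega
  have htm : ∀ u v : ℕ, u ≤ v →
      ((Icc (i+1) r).filter (fun i' => v ≤ l i')).card ≤
      ((Icc (i+1) r).filter (fun i' => u ≤ l i')).card := by
    intro u v h
    apply Finset.card_le_card
    intro x hx
    simp only [mem_filter] at hx ⊢
    exact ⟨hx.1, le_trans h hx.2⟩
  have hinj1 : Set.InjOn (fun j => hin l r i j) (Icc 1 (l i)) := by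
    intro u hu v hv huv
    simp only [coe_Icc, Set.mem_Icc] at hu hv
    simp only [hin] at huv
    rcases lt_trichotomy u v with h | h | h
    · have h1 := htm u v h.le; omega
    · exact h
    · have h1 := htm v u h.le; omega
  have hinj2 : Set.InjOn (fun i' => aN l r i - aN l r i') (Icc (i+1) r) := by
    intro u hu v hv huv
    simp only [coe_Icc, Set.mem_Icc] at hu hv
    have h1 : aN l r u < aN l r i := aN_lt l r lm (by omega) hu.2
    have h2 : aN l r v < aN l r i := aN_lt l r lm (by omega) hv.2
    rcases lt_trichotomy u v with h | h | h
    · have := aN_lt l r lm h hv.2; simp only at huv; omega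
    · exact h
    · have := aN_lt l r lm h hu.2; simp only at huv; omega
  set A : Finset ℕ := (Icc 1 (l i)).image (fun j => hin l r i j) with hA
  set B : Finset ℕ := (Icc (i+1) r).image (fun i' => aN l r i - aN l r i') with hB
  have hcardA : A.card = l i := by
    rw [hA, Finset.card_image_of_injOn hinj1, Nat.card_Icc]; omega
  have hcardB : B.card = r - i := by
    rw [hB, Finset.card_image_of_injOn hinj2, Nat.card_Icc]; omega
  have hsubA : A ⊆ Icc 1 (aN l r i) := by
    intro x hx
    simp only [hA, mem_image, mem_Icc] at hx
    obtain ⟨j, hj, rfl⟩ := hx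
    have := hcard j
    simp only [hin, mem_Icc, aN]
    omega
  have hsubB : B ⊆ Icc 1 (aN l r i) := by
    intro x hx
    simp only [hB, mem_image, mem_Icc] at hx
    obtain ⟨i', hi', rfl⟩ := hx
    have := aN_lt l r lm (show i < i' by omega) hi'.2
    simp only [mem_Icc]
    omega
  have hdisj : Disjoint A B := by
    rw [Finset.disjoint_left]
    intro x hxA hxB
    simp only [hA, hB, mem_image, mem_Icc] at hxA hxB
    obtain ⟨j, hj, rfl⟩ := hxA
    obtain ⟨i', hi', heq⟩ := hxB
    have hlt : aN l r i' < aN l r i := aN_lt l r lm (by omega) hi'.2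
    have hli : l i' ≤ l i := lm i i' (by omega)
    rcases le_or_gt j (l i') with hcase | hcase
    · have := hlow j i' (by omega) hi'.2 hcase
      simp only [hin, aN] at heq hlt ⊢
      omega
    · have h1 := hhigh j i' (by omega) hi'.2 hcase
      have h2 := hcard j
      simp only [hin, aN] at heq hlt ⊢
      omega
  have hunion : A ∪ B = Icc 1 (aN l r i) := by
    apply Finset.eq_of_subset_of_card_le (Finset.union_subset hsubA hsubB)
    rw [Finset.card_union_of_disjoint hdisj, hcardA, hcardB, Nat.card_Icc]
    unfold aN; omega
  calc (∏ j ∈ Icc 1 (l i), g (hin l r i j)) *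
      (∏ i' ∈ Icc (i+1) r, g (aN l r i - aN l r i'))
      = (∏ x ∈ A, g x) * (∏ x ∈ B, g x) := by
        rw [hA, hB, Finset.prod_image hinj1, Finset.prod_image hinj2]
    _ = ∏ x ∈ A ∪ B, g x := (Finset.prod_union hdisj).symm
    _ = ∏ k ∈ Icc 1 (aN l r i), g k := by rw [hunion]

lemma reindex1 (r i : ℕ) (g : ℕ → ℂ) (hir : i ≤ r) :
    ∏ i' ∈ Icc (i+1) r, g (i' - i) = ∏ k ∈ Icc 1 (r - i), g k := by
  apply Finset.prod_nbij' (fun i' => i' - i) (fun k => k + i)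
  · intro a ha; simp only [mem_Icc] at *; omega
  · intro a ha; simp only [mem_Icc] at *; omega
  · intro a ha; simp only [mem_Icc] at *; omega
  · intro a ha; simp only [mem_Icc] at *; omega
  · intro a ha; rfl

lemma reindex2 (l : ℕ → ℕ) (r i : ℕ) (g : ℕ → ℂ) :
    ∏ j ∈ Icc 1 (l i), g (dIn r i j) = ∏ k ∈ Icc (r - i + 1) (aN l r i), g k := by
  apply Finset.prod_nbij' (fun j => r - i + j) (fun k => k - (r - i))
  · intro a ha; simp only [mem_Icc, aN] at *; omega
  · intro a ha; simp only [mem_Icc, aN] at *; omega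
  · intro a ha; simp only [mem_Icc] at *; omega
  · intro a ha; simp only [mem_Icc, aN] at *; omega
  · intro a ha; simp only [mem_Icc] at ha
    congr 1; simp only [dIn]; omega

lemma split_Icc (n m : ℕ) (g : ℕ → ℂ) (h : n ≤ m) :
    (∏ k ∈ Icc 1 n, g k) * (∏ k ∈ Icc (n+1) m, g k) = ∏ k ∈ Icc 1 m, g k := by
  rw [show Icc 1 n = Ioc 0 n from (Finset.Icc_add_one_left_eq_Ioc 0 n),
      show Icc (n+1) m = Ioc n m from (Finset.Icc_add_one_left_eq_Ioc n m),
      show Icc 1 m = Ioc 0 m from (Finset.Icc_add_one_left_eq_Ioc 0 m)]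
  exact Finset.prod_Ioc_consecutive g (Nat.zero_le n) h

/-- The key closed form: the hook product times the product of `aN`-differences
equals the staircase product times the distance product. -/
lemma lemA (l : ℕ → ℕ) (r c : ℕ) (q : ℂ)
    (lm : ∀ u v, u ≤ v → l v ≤ l u) (hc : ∀ i, l i ≤ c) :
    (∏ p ∈ cells l r c, (q ^ hin l r p.1 p.2 - 1)) *
      (∏ p ∈ pairsS r, (q ^ (aN l r p.1 - aN l r p.2) - 1)) =
    (∏ p ∈ pairsS r, (q ^ (p.2 - p.1) - 1)) *
      (∏ p ∈ cells l r c, (q ^ dIn r p.1 p.2 - 1)) := by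
  have e1 : ∏ p ∈ cells l r c, (q ^ hin l r p.1 p.2 - 1)
      = ∏ i ∈ Icc 1 r, ∏ j ∈ Icc 1 (l i), (q ^ hin l r i j - 1) :=
    cells_prod l r c hc (fun i j => q ^ hin l r i j - 1)
  have e2 : ∏ p ∈ cells l r c, (q ^ dIn r p.1 p.2 - 1)
      = ∏ i ∈ Icc 1 r, ∏ j ∈ Icc 1 (l i), (q ^ dIn r i j - 1) :=
    cells_prod l r c hc (fun i j => q ^ dIn r i j - 1)
  have e3 : ∏ p ∈ pairsS r, (q ^ (aN l r p.1 - aN l r p.2) - 1)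
      = ∏ i ∈ Icc 1 r, ∏ i' ∈ Icc (i+1) r, (q ^ (aN l r i - aN l r i') - 1) :=
    pairs_prod r (fun i i' => q ^ (aN l r i - aN l r i') - 1)
  have e4 : ∏ p ∈ pairsS r, (q ^ (p.2 - p.1) - 1)
      = ∏ i ∈ Icc 1 r, ∏ i' ∈ Icc (i+1) r, (q ^ (i' - i) - 1) :=
    pairs_prod r (fun i i' => q ^ (i' - i) - 1)
  rw [e1, e2, e3, e4, ← Finset.prod_mul_distrib, ← Finset.prod_mul_distrib]
  refine Finset.prod_congr rfl fun i hi => ?_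
  simp only [mem_Icc] at hi
  rw [row_lemma l r i q lm hi.2,
      reindex1 r i (fun k => q ^ k - 1) hi.2,
      reindex2 l r i (fun k => q ^ k - 1),
      split_Icc (r - i) (aN l r i) (fun k => q ^ k - 1) (by unfold aN; omega)]

/-- Rotating by 180°, complementary hooks become hooks of the complement. -/
lemma rot_hout (l m : ℕ → ℕ) (r c : ℕ) (q : ℂ)
    (hc : ∀ i, l i ≤ c)
    (hml : ∀ k, 1 ≤ k → k ≤ r → m k = c - l (r + 1 - k)) :
    ∏ p ∈ ocells l r c, (q ^ hout l p.1 p.2 - 1) =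
    ∏ p ∈ cells m r c, (q ^ hin m r p.1 p.2 - 1) := by
  apply Finset.prod_nbij' (fun p => (r + 1 - p.1, c + 1 - p.2))
    (fun p => (r + 1 - p.1, c + 1 - p.2))
  · intro p hp
    simp only [ocells, cells, rect, mem_filter, mem_product, mem_Icc] at hp ⊢
    have h1 : m (r + 1 - p.1) = c - l p.1 := by
      rw [hml (r + 1 - p.1) (by omega) (by omega),
        show r + 1 - (r + 1 - p.1) = p.1 by omega]
    rw [h1]
    have := hc p.1
    omega
  · intro p hp
    simp only [ocells, cells, rect, mem_filter, mem_product, mem_Icc] at hp ⊢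
    have h1 : m p.1 = c - l (r + 1 - p.1) := hml p.1 hp.1.1.1 hp.1.1.2
    rw [h1] at hp
    have := hc (r + 1 - p.1)
    omega
  · intro p hp
    simp only [ocells, rect, mem_filter, mem_product, mem_Icc] at hp
    ext <;> simp <;> omega
  · intro p hp
    simp only [cells, rect, mem_filter, mem_product, mem_Icc] at hp
    ext <;> simp <;> omega
  · intro p hp
    simp only [ocells, rect, mem_filter, mem_product, mem_Icc] at hp
    obtain ⟨⟨⟨hp11, hp12⟩, hp21, hp22⟩, hpl⟩ := hp
    congr 2
    have hlc := hc p.1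
    have hm1 : m (r + 1 - p.1) = c - l p.1 := by
      rw [hml (r + 1 - p.1) (by omega) (by omega),
        show r + 1 - (r + 1 - p.1) = p.1 by omega]
    have hwest : (Finset.Icc 1 (p.2 - 1)).filter (fun j' => l p.1 < j') =
        Finset.Icc (l p.1 + 1) (p.2 - 1) := by
      ext x; simp only [mem_filter, mem_Icc]; omega
    have hwc : ((Finset.Icc 1 (p.2 - 1)).filter (fun j' => l p.1 < j')).card
        = p.2 - 1 - l p.1 := by
      rw [hwest, Nat.card_Icc]; omega
    have hnorth : ((Finset.Icc 1 (p.1 - 1)).filter (fun i' => l i' < p.2)).card =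
        ((Finset.Icc (r + 1 - p.1 + 1) r).filter (fun k => c + 1 - p.2 ≤ m k)).card := by
      apply Finset.card_nbij' (fun i' => r + 1 - i') (fun k => r + 1 - k)
      · intro x hx
        simp only [mem_coe, mem_filter, mem_Icc] at hx ⊢
        have hm2 : m (r + 1 - x) = c - l x := by
          rw [hml (r + 1 - x) (by omega) (by omega),
            show r + 1 - (r + 1 - x) = x by omega]
        rw [hm2]
        have := hc x
        omega
      · intro x hx
        simp only [mem_coe, mem_filter, mem_Icc] at hx ⊢
        have hm2 : m x = c - l (r + 1 - x) := hml x (by omega) hx.1.2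
        rw [hm2] at hx
        have := hc (r + 1 - x)
        omega
      · intro x hx
        simp only [mem_coe, mem_filter, mem_Icc] at hx ⊢
        omega
      · intro x hx
        simp only [mem_coe, mem_filter, mem_Icc] at hx ⊢
        omega
    simp only [hin, hout, hm1, hwc, ← hnorth]
    omega

/-- Rotating by 180°, northeast distances become southwest distances. -/
lemma rot_dout (l m : ℕ → ℕ) (r c : ℕ) (q : ℂ)
    (hc : ∀ i, l i ≤ c)
    (hml : ∀ k, 1 ≤ k → k ≤ r → m k = c - l (r + 1 - k)) :
    ∏ p ∈ ocells l r c, (q ^ dOut c p.1 p.2 - 1) =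
    ∏ p ∈ cells m r c, (q ^ dIn r p.1 p.2 - 1) := by
  apply Finset.prod_nbij' (fun p => (r + 1 - p.1, c + 1 - p.2))
    (fun p => (r + 1 - p.1, c + 1 - p.2))
  · intro p hp
    simp only [ocells, cells, rect, mem_filter, mem_product, mem_Icc] at hp ⊢
    have h1 : m (r + 1 - p.1) = c - l p.1 := by
      rw [hml (r + 1 - p.1) (by omega) (by omega),
        show r + 1 - (r + 1 - p.1) = p.1 by omega]
    rw [h1]
    have := hc p.1
    omega
  · intro p hp
    simp only [ocells, cells, rect, mem_filter, mem_product, mem_Icc] at hp ⊢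
    have h1 : m p.1 = c - l (r + 1 - p.1) := hml p.1 hp.1.1.1 hp.1.1.2
    rw [h1] at hp
    have := hc (r + 1 - p.1)
    omega
  · intro p hp
    simp only [ocells, rect, mem_filter, mem_product, mem_Icc] at hp
    ext <;> simp <;> omega
  · intro p hp
    simp only [cells, rect, mem_filter, mem_product, mem_Icc] at hp
    ext <;> simp <;> omega
  · intro p hp
    simp only [ocells, rect, mem_filter, mem_product, mem_Icc] at hp
    congr 2
    simp only [dIn, dOut]
    omega

/-- Rotating by 180°, `aN`-differences of the complement match those of `l`. -/
lemma rot_pairs (l m : ℕ → ℕ) (r c : ℕ) (q : ℂ)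
    (lm : ∀ u v, u ≤ v → l v ≤ l u) (hc : ∀ i, l i ≤ c)
    (hml : ∀ k, 1 ≤ k → k ≤ r → m k = c - l (r + 1 - k)) :
    ∏ p ∈ pairsS r, (q ^ (aN m r p.1 - aN m r p.2) - 1) =
    ∏ p ∈ pairsS r, (q ^ (aN l r p.1 - aN l r p.2) - 1) := by
  apply Finset.prod_nbij' (fun p => (r + 1 - p.2, r + 1 - p.1))
    (fun p => (r + 1 - p.2, r + 1 - p.1))
  · intro p hp
    simp only [pairsS, mem_filter, mem_product, mem_Icc] at hp ⊢
    omega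
  · intro p hp
    simp only [pairsS, mem_filter, mem_product, mem_Icc] at hp ⊢
    omega
  · intro p hp
    simp only [pairsS, mem_filter, mem_product, mem_Icc] at hp
    ext <;> simp <;> omega
  · intro p hp
    simp only [pairsS, mem_filter, mem_product, mem_Icc] at hp
    ext <;> simp <;> omega
  · intro p hp
    simp only [pairsS, mem_filter, mem_product, mem_Icc] at hp
    obtain ⟨⟨⟨h11, h12⟩, h21, h22⟩, hlt⟩ := hp
    congr 2
    have hm1 : m p.1 = c - l (r + 1 - p.1) := hml p.1 h11 h12
    have hm2 : m p.2 = c - l (r + 1 - p.2) := hml p.2 h21 h22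
    have hmono : l (r + 1 - p.1) ≤ l (r + 1 - p.2) := lm _ _ (by omega)
    have h1 := hc (r + 1 - p.1)
    have h2 := hc (r + 1 - p.2)
    simp only [aN, hm1, hm2]
    omega

/-- **The rational-function identity.** For `λ` inside the `r × c` rectangle
`D`, and any `q` that is not a root of unity,
`∏_{(i,j) ∈ D \ [λ]} (q^{d_{(i,j)}} - 1)/(q^{h_{(i,j)}} - 1)
  = ∏_{(i,j) ∈ [λ]} (q^{d_{(i,j)}} - 1)/(q^{h_{(i,j)}} - 1)`,
where boxes inside `[λ]` carry standard hooks and southwest distances, and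
boxes outside carry complementary hooks and northeast distances. -/
theorem hook_distance_product_identity (r c : ℕ) (hr0 : 0 < r) (hc0 : 0 < c)
    (l : ℕ → ℕ)
    (hA : ∀ i, l (i + 1) ≤ l i) (hr : ∀ i, r < i → l i = 0) (hc : ∀ i, l i ≤ c)
    (q : ℂ) (hq : ∀ m : ℕ, 0 < m → q ^ m ≠ 1) :
    ∏ p ∈ ocells l r c,
        (q ^ dOut c p.1 p.2 - 1) / (q ^ hout l p.1 p.2 - 1) =
      ∏ p ∈ cells l r c,
        (q ^ dIn r p.1 p.2 - 1) / (q ^ hin l r p.1 p.2 - 1) := by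
  have lmA : Antitone l := antitone_nat_of_succ_le hA
  have lm : ∀ u v : ℕ, u ≤ v → l v ≤ l u := fun u v h => lmA h
  set m : ℕ → ℕ := fun k => c - l (r + 1 - k) with hm
  have hml : ∀ k, 1 ≤ k → k ≤ r → m k = c - l (r + 1 - k) := fun k _ _ => rfl
  have mm : ∀ u v : ℕ, u ≤ v → m v ≤ m u := by
    intro u v h
    simp only [hm]
    have := lm (r + 1 - v) (r + 1 - u) (by omega)
    omega
  have mc : ∀ k, m k ≤ c := by intro k; simp only [hm]; omega
  have nz : ∀ k : ℕ, 0 < k → q ^ k - 1 ≠ 0 := fun k hk => sub_ne_zero_of_ne (hq k hk)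
  have hB : (∏ p ∈ ocells l r c, (q ^ hout l p.1 p.2 - 1)) ≠ 0 :=
    Finset.prod_ne_zero_iff.mpr (fun p _ => nz _ (by unfold hout; omega))
  have hD : (∏ p ∈ cells l r c, (q ^ hin l r p.1 p.2 - 1)) ≠ 0 :=
    Finset.prod_ne_zero_iff.mpr (fun p _ => nz _ (by unfold hin; omega))
  rw [Finset.prod_div_distrib, Finset.prod_div_distrib, div_eq_div_iff hB hD]
  -- abbreviations
  have e1 := lemA l r c q lm hc
  have e2 := lemA m r c q mm mc
  have r1 := rot_dout l m r c q hc hml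
  have r2 := rot_hout l m r c q hc hml
  have r3 := rot_pairs l m r c q lm hc hml
  rw [← r1, ← r2, r3] at e2
  have Pne : (∏ p ∈ pairsS r, (q ^ (aN l r p.1 - aN l r p.2) - 1)) ≠ 0 := by
    refine Finset.prod_ne_zero_iff.mpr (fun p hp => nz _ ?_)
    simp only [pairsS, mem_filter, mem_product, mem_Icc] at hp
    have := aN_lt l r lm hp.2 hp.1.2.2
    omega
  apply mul_right_cancel₀ Pne
  linear_combination (∏ p ∈ ocells l r c, (q ^ dOut c p.1 p.2 - 1)) * e1 -
    (∏ p ∈ cells l r c, (q ^ dIn r p.1 p.2 - 1)) * e2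
end

section
/- Main theorem: Let λ be a partition with at most r rows and largest part at most c, and let D be the r × c rectangle of boxes. Then the multiset {h_{(i,j)}(λ) : (i,j) ∈ [λ]} ∪ {d_{(i,j)}(λ) : (i,j) ∈ D \ [λ]} equals the multiset {d_{(i,j)}(λ) : (i,j) ∈ [λ]} ∪ {h_{(i,j)}(λ) : (i,j) ∈ D \ [λ]}. -/
/-! ### Auxiliary lemmas -/

lemma map_eq_sum_singleton {α : Type*} (X : Finset α) (g : α → ℕ) :
    X.val.map g = ∑ p ∈ X, ({g p} : Multiset ℕ) := by
  rw [Finset.sum_eq_multiset_sum,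
    show (fun p => ({g p} : Multiset ℕ)) = (fun a => ({a} : Multiset ℕ)) ∘ g from rfl,
    ← Multiset.map_map, Multiset.sum_map_singleton]

lemma eq_Icc_val (s : Multiset ℕ) (a b : ℕ) (hn : s.Nodup) (hc : Multiset.card s = b + 1 - a)
    (hm : ∀ x ∈ s, x ∈ Finset.Icc a b) : s = (Finset.Icc a b).val := by
  have h : (⟨s, hn⟩ : Finset ℕ) = Finset.Icc a b := by
    refine Finset.eq_of_subset_of_card_le (fun x hx => hm x hx) ?_
    simp [Finset.card_mk, hc, Nat.card_Icc]
  exact congrArg Finset.val h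

lemma Icc_val_split (a b : ℕ) :
    (Finset.Icc 1 (a + b)).val = (Finset.Icc 1 a).val + (Finset.Icc (a + 1) (a + b)).val := by
  symm
  refine eq_Icc_val _ _ _ ?_ ?_ ?_
  · rw [Multiset.nodup_add]
    refine ⟨(Finset.Icc 1 a).nodup, (Finset.Icc (a+1) (a+b)).nodup, ?_⟩
    rw [Multiset.disjoint_left]
    intro x hx hx'
    rw [← Finset.mem_def, Finset.mem_Icc] at hx hx'
    omega
  · simp [Nat.card_Icc]
  · intro x hx
    rw [Multiset.mem_add] at hx
    rcases hx with hx | hx <;> rw [← Finset.mem_def, Finset.mem_Icc] at hx <;>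
      rw [Finset.mem_Icc] <;> omega

lemma cells_decomp (l : ℕ → ℕ) (r c : ℕ) (hc : ∀ i, l i ≤ c) (f : ℕ → ℕ → ℕ) :
    (cells l r c).val.map (fun p => f p.1 p.2)
      = ∑ i ∈ Finset.Icc 1 r, (Finset.Icc 1 (l i)).val.map (f i) := by
  rw [map_eq_sum_singleton, cells, rect, Finset.sum_filter, Finset.sum_product]
  refine Finset.sum_congr rfl fun i _ => ?_
  rw [map_eq_sum_singleton,
    show Finset.Icc 1 (l i) = (Finset.Icc 1 c).filter (fun j => j ≤ l i) by
      ext j; simp only [Finset.mem_Icc, Finset.mem_filter]; have := hc i; omega,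
    Finset.sum_filter]

lemma ocells_decomp (l : ℕ → ℕ) (r c : ℕ) (f : ℕ → ℕ → ℕ) :
    (ocells l r c).val.map (fun p => f p.1 p.2)
      = ∑ i ∈ Finset.Icc 1 r, (Finset.Icc (l i + 1) c).val.map (f i) := by
  rw [map_eq_sum_singleton, ocells, rect, Finset.sum_filter, Finset.sum_product]
  refine Finset.sum_congr rfl fun i _ => ?_
  rw [map_eq_sum_singleton,
    show Finset.Icc (l i + 1) c = (Finset.Icc 1 c).filter (fun j => l i < j) by
      ext j; simp only [Finset.mem_Icc, Finset.mem_filter]; omega,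
    Finset.sum_filter]

lemma rowA (l : ℕ → ℕ) (hl : Antitone l) (r i : ℕ) (hir : i ≤ r) :
    (Finset.Icc 1 (l i)).val.map (hin l r i)
      + (Finset.Icc (i+1) r).val.map (fun k => l i - l k + (k - i))
      = (Finset.Icc 1 ((r - i) + l i)).val := by
  have legle : ∀ j, ((Finset.Icc (i+1) r).filter (fun k => j ≤ l k)).card ≤ r - i := by
    intro j
    calc ((Finset.Icc (i+1) r).filter (fun k => j ≤ l k)).card
        ≤ (Finset.Icc (i+1) r).card := Finset.card_filter_le _ _
      _ = r - i := by rw [Nat.card_Icc]; omega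
  have legmono : ∀ j j', j ≤ j' →
      ((Finset.Icc (i+1) r).filter (fun k => j' ≤ l k)).card
        ≤ ((Finset.Icc (i+1) r).filter (fun k => j ≤ l k)).card := by
    intro j j' h
    apply Finset.card_le_card
    intro k hk; rw [Finset.mem_filter] at hk ⊢; exact ⟨hk.1, le_trans h hk.2⟩
  have fact1 : ∀ j k, i < k →
      k ≤ i + ((Finset.Icc (i+1) r).filter (fun k' => j ≤ l k')).card → j ≤ l k := by
    intro j k h1 h2
    by_contra h; push_neg at h
    have hsub : (Finset.Icc (i+1) r).filter (fun k' => j ≤ l k') ⊆ Finset.Icc (i+1) (k-1) := by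
      intro k' hk'; rw [Finset.mem_filter, Finset.mem_Icc] at hk'; rw [Finset.mem_Icc]
      refine ⟨hk'.1.1, ?_⟩
      by_contra hkk; push_neg at hkk
      have := hl (show k ≤ k' by omega)
      omega
    have := Finset.card_le_card hsub
    rw [Nat.card_Icc] at this
    omega
  have fact2 : ∀ j k, k ≤ r →
      i + ((Finset.Icc (i+1) r).filter (fun k' => j ≤ l k')).card < k → l k < j := by
    intro j k h1 h2
    by_contra h; push_neg at h
    have hsub : Finset.Icc (i+1) k ⊆ (Finset.Icc (i+1) r).filter (fun k' => j ≤ l k') := by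
      intro k' hk'; rw [Finset.mem_Icc] at hk'; rw [Finset.mem_filter, Finset.mem_Icc]
      exact ⟨⟨hk'.1, le_trans hk'.2 h1⟩, le_trans h (hl hk'.2)⟩
    have := Finset.card_le_card hsub
    rw [Nat.card_Icc] at this
    omega
  refine eq_Icc_val _ _ _ ?_ ?_ ?_
  · rw [Multiset.nodup_add]
    refine ⟨?_, ?_, ?_⟩
    · refine Multiset.Nodup.map_on ?_ (Finset.Icc 1 (l i)).nodup
      intro j hj j' hj' he
      rw [← Finset.mem_def, Finset.mem_Icc] at hj hj'
      simp only [hin] at he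
      by_contra hne
      rcases Nat.lt_or_ge j j' with h | h
      · have := legmono j j' (le_of_lt h); omega
      · have := legmono j' j (by omega); omega
    · refine Multiset.Nodup.map_on ?_ (Finset.Icc (i+1) r).nodup
      intro k hk k' hk' he
      rw [← Finset.mem_def, Finset.mem_Icc] at hk hk'
      by_contra hne
      rcases Nat.lt_or_ge k k' with h | h
      · have := hl (le_of_lt h); omega
      · have := hl (show k' ≤ k by omega); omega
    · rw [Multiset.disjoint_left]
      intro x hx hx'
      rw [Multiset.mem_map] at hx hx'
      obtain ⟨j, hj, hxe⟩ := hx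
      obtain ⟨k, hk, hxe'⟩ := hx'
      rw [← Finset.mem_def, Finset.mem_Icc] at hj hk
      simp only [hin] at hxe
      have hlk : l k ≤ l i := hl (by omega)
      rcases le_or_gt k (i + ((Finset.Icc (i+1) r).filter (fun k' => j ≤ l k')).card)
        with h | h
      · have := fact1 j k (by omega) h; omega
      · have := fact2 j k (by omega) h; omega
  · simp only [Multiset.card_add, Multiset.card_map, Finset.card_val, Nat.card_Icc]
    omega
  · intro x hx
    rw [Multiset.mem_add] at hx
    rcases hx with hx | hx <;> rw [Multiset.mem_map] at hx
    · obtain ⟨j, hj, hxe⟩ := hx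
      rw [← Finset.mem_def, Finset.mem_Icc] at hj
      have := legle j
      simp only [hin] at hxe
      rw [Finset.mem_Icc]; omega
    · obtain ⟨k, hk, hxe⟩ := hx
      rw [← Finset.mem_def, Finset.mem_Icc] at hk
      have := hl (show i ≤ k by omega)
      rw [Finset.mem_Icc]; omega

lemma rowB (l : ℕ → ℕ) (hl : Antitone l) (c i : ℕ) (hi : 1 ≤ i) (hcall : ∀ k, l k ≤ c) :
    (Finset.Icc (l i + 1) c).val.map (hout l i)
      + (Finset.Icc 1 (i - 1)).val.map (fun k => l k - l i + (i - k))
      = (Finset.Icc 1 ((i - 1) + (c - l i))).val := by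
  have c1 : ∀ j, l i < j →
      ((Finset.Icc 1 (j-1)).filter (fun j' => l i < j')).card = j - 1 - l i := by
    intro j hj
    rw [show (Finset.Icc 1 (j-1)).filter (fun j' => l i < j') = Finset.Icc (l i + 1) (j-1) by
      ext x; rw [Finset.mem_filter, Finset.mem_Icc, Finset.mem_Icc]; omega, Nat.card_Icc]
    omega
  have houteq : ∀ j, l i < j → hout l i j
      = 1 + (j - 1 - l i) + ((Finset.Icc 1 (i-1)).filter (fun k => l k < j)).card := by
    intro j hj
    simp only [hout]
    have := c1 j hj
    omega
  have uple : ∀ j, ((Finset.Icc 1 (i-1)).filter (fun k => l k < j)).card ≤ i - 1 := by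
    intro j
    calc ((Finset.Icc 1 (i-1)).filter (fun k => l k < j)).card
        ≤ (Finset.Icc 1 (i-1)).card := Finset.card_filter_le _ _
      _ = i - 1 := by rw [Nat.card_Icc]; omega
  have upmono : ∀ j j', j ≤ j' →
      ((Finset.Icc 1 (i-1)).filter (fun k => l k < j)).card
        ≤ ((Finset.Icc 1 (i-1)).filter (fun k => l k < j')).card := by
    intro j j' h
    apply Finset.card_le_card
    intro k hk; rw [Finset.mem_filter] at hk ⊢; exact ⟨hk.1, lt_of_lt_of_le hk.2 h⟩
  have fact1 : ∀ j k, 1 ≤ k → k < i →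
      i - ((Finset.Icc 1 (i-1)).filter (fun k' => l k' < j)).card ≤ k → l k < j := by
    intro j k h1 h2 h3
    by_contra h; push_neg at h
    have hsub : (Finset.Icc 1 (i-1)).filter (fun k' => l k' < j) ⊆ Finset.Icc (k+1) (i-1) := by
      intro k' hk'; rw [Finset.mem_filter, Finset.mem_Icc] at hk'; rw [Finset.mem_Icc]
      refine ⟨?_, hk'.1.2⟩
      by_contra hkk; push_neg at hkk
      have := hl (show k' ≤ k by omega)
      omega
    have hcard := Finset.card_le_card hsub
    rw [Nat.card_Icc] at hcard
    omega
  have fact2 : ∀ j k, 1 ≤ k →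
      k < i - ((Finset.Icc 1 (i-1)).filter (fun k' => l k' < j)).card → j ≤ l k := by
    intro j k h1 h2
    by_contra h; push_neg at h
    have huple := uple j
    have hsub : Finset.Icc k (i-1) ⊆ (Finset.Icc 1 (i-1)).filter (fun k' => l k' < j) := by
      intro k' hk'; rw [Finset.mem_Icc] at hk'; rw [Finset.mem_filter, Finset.mem_Icc]
      exact ⟨⟨le_trans h1 hk'.1, hk'.2⟩, lt_of_le_of_lt (hl hk'.1) h⟩
    have hcard := Finset.card_le_card hsub
    rw [Nat.card_Icc] at hcard
    omega
  refine eq_Icc_val _ _ _ ?_ ?_ ?_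
  · rw [Multiset.nodup_add]
    refine ⟨?_, ?_, ?_⟩
    · refine Multiset.Nodup.map_on ?_ (Finset.Icc (l i + 1) c).nodup
      intro j hj j' hj' he
      rw [← Finset.mem_def, Finset.mem_Icc] at hj hj'
      rw [houteq j (by omega), houteq j' (by omega)] at he
      by_contra hne
      rcases Nat.lt_or_ge j j' with h | h
      · have := upmono j j' (le_of_lt h); omega
      · have := upmono j' j (by omega); omega
    · refine Multiset.Nodup.map_on ?_ (Finset.Icc 1 (i-1)).nodup
      intro k hk k' hk' he
      rw [← Finset.mem_def, Finset.mem_Icc] at hk hk'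
      by_contra hne
      rcases Nat.lt_or_ge k k' with h | h
      · have h1 := hl (le_of_lt h)
        have h2 := hl (show k' ≤ i by omega)
        omega
      · have h1 := hl (show k' ≤ k by omega)
        have h2 := hl (show k ≤ i by omega)
        omega
    · rw [Multiset.disjoint_left]
      intro x hx hx'
      rw [Multiset.mem_map] at hx hx'
      obtain ⟨j, hj, hxe⟩ := hx
      obtain ⟨k, hk, hxe'⟩ := hx'
      rw [← Finset.mem_def, Finset.mem_Icc] at hj hk
      rw [houteq j (by omega)] at hxe
      have hlk : l i ≤ l k := hl (by omega)
      rcases le_or_gt (i - ((Finset.Icc 1 (i-1)).filter (fun k' => l k' < j)).card) k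
        with h | h
      · have := fact1 j k (by omega) (by omega) h; omega
      · have := fact2 j k (by omega) h; omega
  · simp only [Multiset.card_add, Multiset.card_map, Finset.card_val, Nat.card_Icc]
    have := hcall i
    omega
  · intro x hx
    rw [Multiset.mem_add] at hx
    rcases hx with hx | hx <;> rw [Multiset.mem_map] at hx
    · obtain ⟨j, hj, hxe⟩ := hx
      rw [← Finset.mem_def, Finset.mem_Icc] at hj
      rw [houteq j (by omega)] at hxe
      have := uple j
      rw [Finset.mem_Icc]; omega
    · obtain ⟨k, hk, hxe⟩ := hx
      rw [← Finset.mem_def, Finset.mem_Icc] at hk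
      have h2 := hl (show k ≤ i by omega)
      have h3 := hcall k
      rw [Finset.mem_Icc]; omega

lemma rowC (r i li : ℕ) (hir : i ≤ r) :
    (Finset.Icc 1 li).val.map (dIn r i) = (Finset.Icc (r - i + 1) ((r - i) + li)).val := by
  refine eq_Icc_val _ _ _ ?_ ?_ ?_
  · refine Multiset.Nodup.map_on ?_ (Finset.Icc 1 li).nodup
    intro j hj j' hj' he
    rw [← Finset.mem_def, Finset.mem_Icc] at hj hj'
    simp only [dIn] at he; omega
  · simp only [Multiset.card_map, Finset.card_val, Nat.card_Icc]; omega
  · intro x hx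
    rw [Multiset.mem_map] at hx
    obtain ⟨j, hj, hxe⟩ := hx
    rw [← Finset.mem_def, Finset.mem_Icc] at hj
    simp only [dIn] at hxe
    rw [Finset.mem_Icc]; omega

lemma rowD (c i li : ℕ) (hi : 1 ≤ i) (hli : li ≤ c) :
    (Finset.Icc (li + 1) c).val.map (dOut c i) = (Finset.Icc i ((i - 1) + (c - li))).val := by
  refine eq_Icc_val _ _ _ ?_ ?_ ?_
  · refine Multiset.Nodup.map_on ?_ (Finset.Icc (li+1) c).nodup
    intro j hj j' hj' he
    rw [← Finset.mem_def, Finset.mem_Icc] at hj hj'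
    simp only [dOut] at he; omega
  · simp only [Multiset.card_map, Finset.card_val, Nat.card_Icc]; omega
  · intro x hx
    rw [Multiset.mem_map] at hx
    obtain ⟨j, hj, hxe⟩ := hx
    rw [← Finset.mem_def, Finset.mem_Icc] at hj
    simp only [dOut] at hxe
    rw [Finset.mem_Icc]; omega

lemma exchangeST (l : ℕ → ℕ) (r : ℕ) :
    ∑ i ∈ Finset.Icc 1 r, (Finset.Icc (i+1) r).val.map (fun k => l i - l k + (k - i))
      = ∑ i ∈ Finset.Icc 1 r, (Finset.Icc 1 (i-1)).val.map (fun k => l k - l i + (i - k)) := by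
  calc ∑ i ∈ Finset.Icc 1 r, (Finset.Icc (i+1) r).val.map (fun k => l i - l k + (k - i))
      = ∑ i ∈ Finset.Ico 1 (r+1), ∑ k ∈ Finset.Ico (i+1) (r+1),
          ({l i - l k + (k - i)} : Multiset ℕ) := by
        rw [Finset.Ico_add_one_right_eq_Icc]
        refine Finset.sum_congr rfl fun i _ => ?_
        rw [map_eq_sum_singleton, Finset.Ico_add_one_right_eq_Icc]
    _ = ∑ k ∈ Finset.Ico 1 (r+1), ∑ i ∈ Finset.Ico 1 k,
          ({l i - l k + (k - i)} : Multiset ℕ) :=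
        Finset.sum_Ico_Ico_comm' 1 (r+1) _
    _ = ∑ i ∈ Finset.Icc 1 r, (Finset.Icc 1 (i-1)).val.map (fun k => l k - l i + (i - k)) := by
        rw [Finset.Ico_add_one_right_eq_Icc]
        refine Finset.sum_congr rfl fun k _ => ?_
        rw [map_eq_sum_singleton]
        apply Finset.sum_congr
        · ext x; rw [Finset.mem_Ico, Finset.mem_Icc]; omega
        · intro x _; rfl

lemma exchangeIcc (r : ℕ) :
    ∑ i ∈ Finset.Icc 1 r, (Finset.Icc 1 (r - i)).val
      = ∑ i ∈ Finset.Icc 1 r, (Finset.Icc 1 (i - 1)).val := by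
  refine Finset.sum_nbij' (fun a => r + 1 - a) (fun a => r + 1 - a) ?_ ?_ ?_ ?_ ?_ <;>
    intro a ha <;> rw [Finset.mem_Icc] at ha <;> beta_reduce
  · rw [Finset.mem_Icc]; omega
  · rw [Finset.mem_Icc]; omega
  · omega
  · omega
  · have h : r + 1 - a - 1 = r - a := by omega
    rw [h]

/-- **Main theorem.** For a partition `λ` inside the `r × c` rectangle `D`, the
multiset of entries of the hook/distance tableau (hook lengths on `[λ]`,
distances on `D \ [λ]`) equals the multiset of entries of the distance/hook
tableau (distances on `[λ]`, complementary hook lengths on `D \ [λ]`). -/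
theorem hook_distance_main (r c : ℕ) (hr0 : 0 < r) (hc0 : 0 < c) (l : ℕ → ℕ)
    (hA : ∀ i, l (i + 1) ≤ l i) (hr : ∀ i, r < i → l i = 0) (hc : ∀ i, l i ≤ c) :
    (cells l r c).val.map (fun p => hin l r p.1 p.2) +
        (ocells l r c).val.map (fun p => dOut c p.1 p.2) =
      (cells l r c).val.map (fun p => dIn r p.1 p.2) +
        (ocells l r c).val.map (fun p => hout l p.1 p.2) := by
  have hl : Antitone l := antitone_nat_of_succ_le hA
  rw [cells_decomp l r c hc (fun i j => hin l r i j),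
      cells_decomp l r c hc (fun i j => dIn r i j),
      ocells_decomp l r c (fun i j => dOut c i j),
      ocells_decomp l r c (fun i j => hout l i j)]
  have eA : (∑ i ∈ Finset.Icc 1 r, (Finset.Icc 1 (l i)).val.map (hin l r i))
      + (∑ i ∈ Finset.Icc 1 r, (Finset.Icc (i+1) r).val.map (fun k => l i - l k + (k - i)))
      = (∑ i ∈ Finset.Icc 1 r, (Finset.Icc 1 (r - i)).val)
        + (∑ i ∈ Finset.Icc 1 r, (Finset.Icc (r - i + 1) ((r - i) + l i)).val) := by
    rw [← Finset.sum_add_distrib, ← Finset.sum_add_distrib]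
    refine Finset.sum_congr rfl fun i hi => ?_
    rw [Finset.mem_Icc] at hi
    rw [rowA l hl r i hi.2]
    exact Icc_val_split (r - i) (l i)
  have eB : (∑ i ∈ Finset.Icc 1 r, (Finset.Icc (l i + 1) c).val.map (hout l i))
      + (∑ i ∈ Finset.Icc 1 r, (Finset.Icc 1 (i-1)).val.map (fun k => l k - l i + (i - k)))
      = (∑ i ∈ Finset.Icc 1 r, (Finset.Icc 1 (i - 1)).val)
        + (∑ i ∈ Finset.Icc 1 r, (Finset.Icc i ((i - 1) + (c - l i))).val) := by
    rw [← Finset.sum_add_distrib, ← Finset.sum_add_distrib]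
    refine Finset.sum_congr rfl fun i hi => ?_
    rw [Finset.mem_Icc] at hi
    rw [rowB l hl c i hi.1 hc, Icc_val_split (i - 1) (c - l i),
      show i - 1 + 1 = i by omega]
  have eC : (∑ i ∈ Finset.Icc 1 r, (Finset.Icc 1 (l i)).val.map (dIn r i))
      = ∑ i ∈ Finset.Icc 1 r, (Finset.Icc (r - i + 1) ((r - i) + l i)).val := by
    refine Finset.sum_congr rfl fun i hi => ?_
    rw [Finset.mem_Icc] at hi
    exact rowC r i (l i) hi.2
  have eD : (∑ i ∈ Finset.Icc 1 r, (Finset.Icc (l i + 1) c).val.map (dOut c i))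
      = ∑ i ∈ Finset.Icc 1 r, (Finset.Icc i ((i - 1) + (c - l i))).val := by
    refine Finset.sum_congr rfl fun i hi => ?_
    rw [Finset.mem_Icc] at hi
    exact rowD c i (l i) hi.1 (hc i)
  have hST := exchangeST l r
  have eswap := exchangeIcc r
  refine add_right_cancel
    (b := ∑ i ∈ Finset.Icc 1 r, (Finset.Icc (i+1) r).val.map (fun k => l i - l k + (k - i))) ?_
  calc (∑ i ∈ Finset.Icc 1 r, (Finset.Icc 1 (l i)).val.map (hin l r i)
          + ∑ i ∈ Finset.Icc 1 r, (Finset.Icc (l i + 1) c).val.map (dOut c i))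
        + ∑ i ∈ Finset.Icc 1 r, (Finset.Icc (i+1) r).val.map (fun k => l i - l k + (k - i))
      = ((∑ i ∈ Finset.Icc 1 r, (Finset.Icc 1 (l i)).val.map (hin l r i))
          + ∑ i ∈ Finset.Icc 1 r, (Finset.Icc (i+1) r).val.map (fun k => l i - l k + (k - i)))
        + ∑ i ∈ Finset.Icc 1 r, (Finset.Icc (l i + 1) c).val.map (dOut c i) := by abel
    _ = ((∑ i ∈ Finset.Icc 1 r, (Finset.Icc 1 (r - i)).val)
          + (∑ i ∈ Finset.Icc 1 r, (Finset.Icc (r - i + 1) ((r - i) + l i)).val))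
        + ∑ i ∈ Finset.Icc 1 r, (Finset.Icc i ((i - 1) + (c - l i))).val := by rw [eA, eD]
    _ = ((∑ i ∈ Finset.Icc 1 r, (Finset.Icc 1 (i - 1)).val)
          + (∑ i ∈ Finset.Icc 1 r, (Finset.Icc (r - i + 1) ((r - i) + l i)).val))
        + ∑ i ∈ Finset.Icc 1 r, (Finset.Icc i ((i - 1) + (c - l i))).val := by rw [eswap]
    _ = (∑ i ∈ Finset.Icc 1 r, (Finset.Icc 1 (l i)).val.map (dIn r i))
        + (((∑ i ∈ Finset.Icc 1 r, (Finset.Icc 1 (i - 1)).val)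
          + (∑ i ∈ Finset.Icc 1 r, (Finset.Icc i ((i - 1) + (c - l i))).val))) := by
        rw [← eC]; abel
    _ = (∑ i ∈ Finset.Icc 1 r, (Finset.Icc 1 (l i)).val.map (dIn r i))
        + ((∑ i ∈ Finset.Icc 1 r, (Finset.Icc (l i + 1) c).val.map (hout l i))
          + ∑ i ∈ Finset.Icc 1 r, (Finset.Icc 1 (i-1)).val.map (fun k => l k - l i + (i - k))) := by
        rw [eB]
    _ = (∑ i ∈ Finset.Icc 1 r, (Finset.Icc 1 (l i)).val.map (dIn r i)
          + ∑ i ∈ Finset.Icc 1 r, (Finset.Icc (l i + 1) c).val.map (hout l i))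
        + ∑ i ∈ Finset.Icc 1 r, (Finset.Icc (i+1) r).val.map (fun k => l i - l k + (k - i)) := by
        rw [hST]; abel
end

section
/- Let t be a semistandard Young tableau of shape λ with entries in {1,…,r}, where λ fits in the r × c rectangle, and let t° be the λ°-tableau whose column-j entries are the increasing arrangement of the complement in {1,…,r} of the column-(c+1−j) entries of t. Then the columns of t° are strictly increasing and its rows are weakly increasing, i.e., t° is semistandard. -/
/-- Characterization of the `i`-th smallest element of a finite set of naturals. -/
lemma sort_getD_le_iff (A : Finset ℕ) (i x : ℕ) (hi : i < A.card) :
    (A.sort (· ≤ ·)).getD i 0 ≤ x ↔ i < (A.filter (· ≤ x)).card := by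
  classical
  set L := A.sort (· ≤ ·) with hLdef
  have hlen : L.length = A.card := Finset.length_sort _
  have hiL : i < L.length := by omega
  have hsorted : L.Pairwise (· ≤ ·) := Finset.pairwise_sort _ _
  have hcard : (A.filter (· ≤ x)).card = (L.filter (fun a => a ≤ x)).length := by
    have h1 : (A.filter (· ≤ x)).card = Multiset.card (Multiset.filter (· ≤ x) A.val) := by
      rfl
    have h2 : (A.val : Multiset ℕ) = (L : Multiset ℕ) := (Finset.sort_eq _ _).symm
    rw [h1, h2]
    simp [Multiset.filter_coe]
  rw [hcard]
  have hgetD : L.getD i 0 = L[i]'hiL := by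
    simp [List.getD_eq_getElem?_getD, List.getElem?_eq_getElem hiL]
  rw [hgetD]
  constructor
  · intro h
    have hall : (L.take (i + 1)).filter (fun a => a ≤ x) = L.take (i + 1) := by
      apply List.filter_eq_self.2
      intro a ha
      obtain ⟨k, hk, hka⟩ := List.mem_iff_getElem.1 ha
      have hk' : k < i + 1 := by
        have := hk; rw [List.length_take] at this; omega
      have hkL : k < L.length := by omega
      have : (L.take (i+1))[k]'hk = L[k]'hkL := List.getElem_take
      rw [this] at hka
      have hle : L[k]'hkL ≤ L[i]'hiL := by
        rcases Nat.lt_or_ge k i with hki | hki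
        · exact hsorted.rel_get_of_lt (a := ⟨k, hkL⟩) (b := ⟨i, hiL⟩) hki
        · have : k = i := by omega
          subst this; exact le_rfl
      simpa [← hka] using decide_eq_true (le_trans hle h)
    have hsub : List.Sublist ((L.take (i + 1)).filter (fun a => a ≤ x)) (L.filter (fun a => a ≤ x)) :=
      (List.take_sublist (i+1) L).filter _
    have := hsub.length_le
    rw [hall, List.length_take] at this
    omega
  · intro h
    by_contra hx
    push_neg at hx
    have hdrop : (L.drop i).filter (fun a => a ≤ x) = [] := by
      apply List.filter_eq_nil_iff.2
      intro a ha
      obtain ⟨k, hk, hka⟩ := List.mem_iff_getElem.1 ha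
      have hkL : i + k < L.length := by
        have := hk; rw [List.length_drop] at this; omega
      have : (L.drop i)[k]'hk = L[i+k]'hkL := (List.getElem_drop' hkL).symm
      rw [this] at hka
      have hle : L[i]'hiL ≤ L[i+k]'hkL := by
        rcases Nat.eq_zero_or_pos k with rfl | hk0
        · simp
        · have := hsorted.rel_get_of_lt (a := ⟨i, hiL⟩) (b := ⟨i+k, hkL⟩) (by simp [Fin.lt_def]; omega)
          simpa using this
      subst hka
      simp only [decide_eq_true_eq]
      omega
    have hsplit : L.filter (fun a => a ≤ x) =
        (L.take i).filter (fun a => a ≤ x) ++ (L.drop i).filter (fun a => a ≤ x) := by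
      rw [← List.filter_append, List.take_append_drop]
    rw [hsplit, hdrop, List.append_nil] at h
    have := List.length_filter_le (fun a => a ≤ x) (L.take i)
    rw [List.length_take] at this
    omega

lemma kth_mono (A B : Finset ℕ) (i : ℕ) (hiA : i < A.card) (hiB : i < B.card)
    (h : ∀ x, (B.filter (· ≤ x)).card ≤ (A.filter (· ≤ x)).card) :
    (A.sort (· ≤ ·)).getD i 0 ≤ (B.sort (· ≤ ·)).getD i 0 := by
  have hb : i < (B.filter (· ≤ (B.sort (· ≤ ·)).getD i 0)).card :=
    (sort_getD_le_iff B i _ hiB).1 le_rfl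
  exact (sort_getD_le_iff A i _ hiA).2 (lt_of_lt_of_le hb (h _))





/-- **The column complement of a semistandard tableau is semistandard.** If
`t ∈ SSYT_r(λ)` with `λ` inside the `r × c` rectangle, then the tableau `t°`
of shape `λ°`, whose column-`j` entries are the increasing arrangement of the
complement in `{1, …, r}` of the column-`(c+1-j)` entries of `t`, has strictly
increasing columns and weakly increasing rows, i.e. `t°` is semistandard. -/

theorem complMap_semistandard (r c : ℕ) (hr0 : 0 < r) (hc0 : 0 < c)
    (l : ℕ → ℕ)
    (hA : ∀ i, l (i + 1) ≤ l i) (hr : ∀ i, r < i → l i = 0) (hc : ∀ i, l i ≤ c)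
    (t : ℕ → ℕ → ℕ) (ht : IsSSYT l r t) :
    IsSSYT (lcomp l r c) r (complMap l r c t) := by
  classical
  obtain ⟨hbound, hrow, hcol, hzero⟩ := ht
  -- l is antitone
  have hanti : ∀ a b : ℕ, a ≤ b → l b ≤ l a :=
    fun a b h => antitone_nat_of_succ_le hA h
  -- strict increase down columns, across gaps
  have hcolstrict : ∀ j, 1 ≤ j → ∀ i' i, 1 ≤ i → i < i' → j ≤ l i' → t i j < t i' j := by
    intro j hj i'
    induction i' with
    | zero => intro i hi hii _; omega
    | succ n ih =>
      intro i hi hii hjn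
      rcases Nat.lt_or_ge i n with h | h
      · exact lt_trans (ih i hi h (le_trans hjn (hA n))) (hcol n j (by omega) hj hjn)
      · have : i = n := by omega
        subst this
        exact hcol i j hi hj hjn
  -- injectivity of the column map on its rows
  have hinj : ∀ j, 1 ≤ j → Set.InjOn (fun i => t i j)
      ((Finset.Icc 1 r).filter (fun i => j ≤ l i)) := by
    intro j hj a ha b hb hab
    simp only [Finset.coe_filter, Finset.mem_Icc, Set.mem_setOf_eq] at ha hb
    by_contra hne
    rcases lt_or_gt_of_ne hne with h | h
    · exact absurd hab (ne_of_lt (hcolstrict j hj b a ha.1.1 h hb.2))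
    · exact absurd hab.symm (ne_of_lt (hcolstrict j hj a b hb.1.1 h ha.2))
  have hcardcol : ∀ j, 1 ≤ j → (colEntries l r t j).card =
      ((Finset.Icc 1 r).filter (fun i => j ≤ l i)).card :=
    fun j hj => Finset.card_image_of_injOn (hinj j hj)
  have hsubIcc : ∀ j, 1 ≤ j → colEntries l r t j ⊆ Finset.Icc 1 r := by
    intro j hj a ha
    obtain ⟨i, hi, rfl⟩ := Finset.mem_image.1 ha
    simp only [Finset.mem_filter, Finset.mem_Icc] at hi
    exact Finset.mem_Icc.2 (hbound i j hi.1.1 hj hi.2)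
  have hScard : ∀ j, 1 ≤ j → (Finset.Icc 1 r \ colEntries l r t j).card =
      r - ((Finset.Icc 1 r).filter (fun i => j ≤ l i)).card := by
    intro j hj
    rw [Finset.card_sdiff_of_subset (hsubIcc j hj), hcardcol j hj, Nat.card_Icc]
    omega
  -- shape bound: a cell in the complement shape gives room in the complement column
  have hidx : ∀ i j, 1 ≤ i → 1 ≤ j → j ≤ lcomp l r c i →
      i + ((Finset.Icc 1 r).filter (fun k => c + 1 - j ≤ l k)).card ≤ r := by
    intro i j hi hj hjl
    have hir : i ≤ r := by
      by_contra h
      simp only [lcomp, if_neg (by omega : ¬ i ≤ r)] at hjl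
      omega
    simp only [lcomp, if_pos hir] at hjl
    have hlc : l (r + 1 - i) ≤ c := hc _
    have hjc : j ≤ c := by omega
    have hsubf : ((Finset.Icc 1 r).filter (fun k => c + 1 - j ≤ l k)) ⊆
        Finset.Icc 1 (r - i) := by
      intro k hk
      simp only [Finset.mem_filter, Finset.mem_Icc] at hk ⊢
      refine ⟨hk.1.1, ?_⟩
      by_contra hgt
      have hk3 : r + 1 - i ≤ k := by omega
      have := hanti (r + 1 - i) k hk3
      omega
    have := Finset.card_le_card hsubf
    rw [Nat.card_Icc] at this
    omega
  -- column condition ⇒ entry index is within the sorted complement list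
  have hlen : ∀ i j, 1 ≤ i → 1 ≤ j → j ≤ lcomp l r c i →
      i ≤ (Finset.sort (Finset.Icc 1 r \ colEntries l r t (c + 1 - j)) (· ≤ ·)).length := by
    intro i j hi hj hjl
    have hjc : 1 ≤ c + 1 - j := by
      have hir : i ≤ r := by
        by_contra h
        simp only [lcomp, if_neg (by omega : ¬ i ≤ r)] at hjl; omega
      simp only [lcomp, if_pos hir] at hjl
      omega
    rw [Finset.length_sort, hScard _ hjc]
    have := hidx i j hi hj hjl
    omega
  -- dominance between adjacent columns of t
  have hdom : ∀ j', 2 ≤ j' → ∀ x,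
      ((colEntries l r t j').filter (· ≤ x)).card ≤
        ((colEntries l r t (j' - 1)).filter (· ≤ x)).card := by
    intro j' hj' x
    have key : ∀ j'', (colEntries l r t j'').filter (· ≤ x) =
        ((Finset.Icc 1 r).filter (fun i => (j'' ≤ l i ∧ t i j'' ≤ x))).image
          (fun i => t i j'') := by
      intro j''
      rw [colEntries, Finset.filter_image, Finset.filter_filter]
    have hinj' : ∀ j'', 1 ≤ j'' → Set.InjOn (fun i => t i j'')
        ((Finset.Icc 1 r).filter (fun i => (j'' ≤ l i ∧ t i j'' ≤ x))) := by
      intro j'' hj'' a ha b hb hab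
      apply hinj j'' hj''
      · simp only [Finset.coe_filter, Set.mem_setOf_eq] at ha ⊢; exact ⟨ha.1, ha.2.1⟩
      · simp only [Finset.coe_filter, Set.mem_setOf_eq] at hb ⊢; exact ⟨hb.1, hb.2.1⟩
      · exact hab
    rw [key j', key (j' - 1),
      Finset.card_image_of_injOn (hinj' j' (by omega)),
      Finset.card_image_of_injOn (hinj' (j' - 1) (by omega))]
    apply Finset.card_le_card
    intro i hi
    simp only [Finset.mem_filter, Finset.mem_Icc] at hi ⊢
    obtain ⟨⟨hi1, hi2⟩, hi3, hi4⟩ := hi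
    have h1 : j' - 1 ≤ l i := by omega
    have h2 : t i (j' - 1) ≤ t i j' := by
      have := hrow i (j' - 1) hi1 (by omega) (by omega)
      have he : j' - 1 + 1 = j' := by omega
      rwa [he] at this
    exact ⟨⟨hi1, hi2⟩, h1, le_trans h2 hi4⟩
  -- complement dominance
  have hcompdom : ∀ (A B : Finset ℕ), A ⊆ Finset.Icc 1 r → B ⊆ Finset.Icc 1 r →
      (∀ x, (A.filter (· ≤ x)).card ≤ (B.filter (· ≤ x)).card) →
      ∀ x, (((Finset.Icc 1 r \ B)).filter (· ≤ x)).card ≤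
        (((Finset.Icc 1 r \ A)).filter (· ≤ x)).card := by
    intro A B hAs hBs hAB x
    have key : ∀ (C : Finset ℕ), C ⊆ Finset.Icc 1 r →
        ((Finset.Icc 1 r \ C).filter (· ≤ x)).card + (C.filter (· ≤ x)).card =
          (((Finset.Icc 1 r)).filter (· ≤ x)).card := by
      intro C hC
      have heq : (Finset.Icc 1 r \ C).filter (· ≤ x) =
          (Finset.Icc 1 r).filter (· ≤ x) \ C.filter (· ≤ x) := by
        ext a
        simp only [Finset.mem_filter, Finset.mem_sdiff]
        tauto
      have hsub2 : C.filter (· ≤ x) ⊆ (Finset.Icc 1 r).filter (· ≤ x) :=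
        Finset.filter_subset_filter _ hC
      rw [heq, Finset.card_sdiff_of_subset hsub2]
      have := Finset.card_le_card hsub2
      omega
    have h1 := key A hAs
    have h2 := key B hBs
    have := hAB x
    omega
  refine ⟨?_, ?_, ?_, ?_⟩
  · -- entries in [1, r]
    intro i j hi hj hjl
    rw [complMap, if_pos ⟨hi, hj, hjl⟩]
    set L := Finset.sort (Finset.Icc 1 r \ colEntries l r t (c + 1 - j)) (· ≤ ·) with hL
    have hlenL : i ≤ L.length := hlen i j hi hj hjl
    have hiL : i - 1 < L.length := by omega
    have hmem : L.getD (i - 1) 0 ∈ L := by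
      rw [List.getD_eq_getElem?_getD, List.getElem?_eq_getElem hiL]
      exact List.getElem_mem hiL
    have := Finset.mem_sort (α := ℕ) (· ≤ ·) |>.1 hmem
    have := (Finset.mem_sdiff.1 this).1
    exact Finset.mem_Icc.1 this
  · -- rows weakly increase
    intro i j hi hj hjl
    have hjl' : j ≤ lcomp l r c i := by omega
    rw [complMap, if_pos ⟨hi, hj, hjl'⟩, complMap, if_pos ⟨hi, by omega, hjl⟩]
    have hjc : j + 1 ≤ c := by
      have hir : i ≤ r := by
        by_contra h
        simp only [lcomp, if_neg (by omega : ¬ i ≤ r)] at hjl; omega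
      simp only [lcomp, if_pos hir] at hjl
      omega
    have he : c + 1 - (j + 1) = c - j := by omega
    rw [he]
    have hiA : i - 1 < (Finset.Icc 1 r \ colEntries l r t (c + 1 - j)).card := by
      have := hlen i j hi hj hjl'
      rw [Finset.length_sort] at this
      omega
    have hiB : i - 1 < (Finset.Icc 1 r \ colEntries l r t (c - j)).card := by
      have := hlen i (j + 1) hi (by omega) hjl
      rw [Finset.length_sort, he] at this
      omega
    apply kth_mono _ _ (i - 1) hiA hiB
    intro x
    apply hcompdom
    · exact hsubIcc (c + 1 - j) (by omega)
    · exact hsubIcc (c - j) (by omega)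
    · intro y
      have h2j : 2 ≤ c + 1 - j := by omega
      have hem : c + 1 - j - 1 = c - j := by omega
      have := hdom (c + 1 - j) h2j y
      rwa [hem] at this
  · -- columns strictly increase
    intro i j hi hj hjl
    have hir : i + 1 ≤ r := by
      by_contra h
      simp only [lcomp, if_neg (by omega : ¬ i + 1 ≤ r)] at hjl; omega
    have hjl' : j ≤ lcomp l r c i := by
      have h1 : lcomp l r c (i + 1) ≤ lcomp l r c i := by
        simp only [lcomp, if_pos (by omega : i ≤ r), if_pos hir]
        have : r + 1 - (i + 1) ≤ r + 1 - i := by omega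
        have := hanti (r + 1 - (i + 1)) (r + 1 - i) this
        omega
      omega
    rw [complMap, if_pos ⟨hi, hj, hjl'⟩, complMap, if_pos ⟨by omega, hj, hjl⟩]
    set L := Finset.sort (Finset.Icc 1 r \ colEntries l r t (c + 1 - j)) (· ≤ ·) with hL
    have hlenL : i + 1 ≤ L.length := hlen (i + 1) j (by omega) hj hjl
    have h1 : i - 1 < L.length := by omega
    have h2 : i + 1 - 1 < L.length := by omega
    have hsorted : L.Pairwise (· < ·) := (Finset.sortedLT_sort _).pairwise
    have hstrict : L[i - 1]'h1 < L[i + 1 - 1]'h2 :=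
      hsorted.rel_get_of_lt (a := ⟨i - 1, h1⟩) (b := ⟨i + 1 - 1, h2⟩)
        (by simp [Fin.lt_def]; omega)
    rw [List.getD_eq_getElem?_getD, List.getElem?_eq_getElem h1,
      List.getD_eq_getElem?_getD, List.getElem?_eq_getElem h2]
    simpa using hstrict
  · -- zero outside
    intro i j hns
    rw [complMap, if_neg hns]
end
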